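/- Let R be a non-empty left head variable free ATRS with dc_R(n) ∈ O(n^k). Then the derivational complexity of the relative system R_η↓ / U(R) is also in O(n^k); more precisely dc_{R_η↓/U}(n) ≤ dc_R(2n) for all n. -/

import Mathlib

/-- First-order terms over a signature `F` with arity function `ar` and variables `V`. -/
inductive Term (F : Type) (ar : F → ℕ) (V : Type) : Type where
  | var : V → Term F ar V
  | app : (f : F) → (Fin (ar f) → Term F ar V) → Term F ar V

namespace Term

variable {F V : Type} {ar : F → ℕ}

/-- Application of a substitution. -/
def subst (σ : V → Term F ar V) : Term F ar V → Term F ar V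
  | .var x => σ x
  | .app f ts => .app f (fun i => (ts i).subst σ)

/-- Size of a term. -/
def size : Term F ar V → ℕ
  | .var _ => 1
  | .app _ ts => 1 + ∑ i, (ts i).size

end Term

section Rewriting

variable {F V : Type} {ar : F → ℕ}

/-- The (reflexive) subterm relation: `Subterm u t` means `u` occurs in `t`. -/
inductive Subterm : Term F ar V → Term F ar V → Prop where
  | refl (t) : Subterm t t
  | app (f) (ts : Fin (ar f) → Term F ar V) (i) (u) :
      Subterm u (ts i) → Subterm u (.app f ts)

/-- Proper subterm: `PSub u t` means `u` is a proper subterm of `t`. -/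
def PSub (u t : Term F ar V) : Prop :=
  ∃ (f : F) (ts : Fin (ar f) → Term F ar V) (i : Fin (ar f)),
    t = Term.app f ts ∧ Subterm u (ts i)

/-- One-step rewrite relation of a TRS `R`: closure of the rules under
contexts and substitutions. -/
inductive Rew (R : Set (Term F ar V × Term F ar V)) : Term F ar V → Term F ar V → Prop where
  | rule (l r : Term F ar V) (σ : V → Term F ar V) :
      (l, r) ∈ R → Rew R (l.subst σ) (r.subst σ)
  | congr (f : F) (ts : Fin (ar f) → Term F ar V) (i : Fin (ar f)) (u : Term F ar V) :
      Rew R (ts i) u → Rew R (.app f ts) (.app f (Function.update ts i u))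

/-- Many-step rewriting. -/
def RStar (R : Set (Term F ar V × Term F ar V)) : Term F ar V → Term F ar V → Prop :=
  Relation.ReflTransGen (Rew R)

/-- Normal forms. -/
def NF (R : Set (Term F ar V × Term F ar V)) (t : Term F ar V) : Prop := ∀ u, ¬ Rew R t u

/-- `t` rewrites to the normal form `u` (w.r.t. `R`). -/
def NormTo (R : Set (Term F ar V × Term F ar V)) (t u : Term F ar V) : Prop :=
  RStar R t u ∧ NF R u

/-- Termination: the rewrite relation is well-founded. -/
def Terminating (R : Set (Term F ar V × Term F ar V)) : Prop :=
  WellFounded (fun t s => Rew R s t)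

/-- Confluence. -/
def Confluent (R : Set (Term F ar V × Term F ar V)) : Prop :=
  ∀ s t u, RStar R s t → RStar R s u → ∃ v, RStar R t v ∧ RStar R u v

/-- Innermost one-step rewriting: the contracted redex has only normal
proper subterms. -/
inductive IRew (R : Set (Term F ar V × Term F ar V)) : Term F ar V → Term F ar V → Prop where
  | rule (l r : Term F ar V) (σ : V → Term F ar V) :
      (l, r) ∈ R → (∀ u, PSub u (l.subst σ) → NF R u) →
      IRew R (l.subst σ) (r.subst σ)
  | congr (f : F) (ts : Fin (ar f) → Term F ar V) (i : Fin (ar f)) (u : Term F ar V) :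
      IRew R (ts i) u → IRew R (.app f ts) (.app f (Function.update ts i u))

/-- Innermost termination. -/
def ITerminating (R : Set (Term F ar V × Term F ar V)) : Prop :=
  WellFounded (fun t s => IRew R s t)

/-- `m`-fold composition of a relation. -/
def RelPow (r : α → α → Prop) : ℕ → α → α → Prop
  | 0 => Eq
  | n + 1 => fun a c => ∃ b, r a b ∧ RelPow r n b c

/-- Derivation height of `t` w.r.t. a relation. -/
noncomputable def dh (r : α → α → Prop) (t : α) : ℕ :=
  sSup { m | ∃ u, RelPow r m t u }

/-- Derivational complexity w.r.t. a relation, restricted to starting terms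
satisfying `P`. -/
noncomputable def dcOn {F V : Type} {ar : F → ℕ}
    (r : Term F ar V → Term F ar V → Prop) (P : Term F ar V → Prop) (n : ℕ) : ℕ :=
  sSup { m | ∃ t, P t ∧ t.size ≤ n ∧ m = dh r t }

/-- `f ∈ O(g)`. -/
def BigO (f g : ℕ → ℕ) : Prop := ∃ M N : ℕ, ∀ n, f n ≤ M * g n + N

end Rewriting
section ATRS

/-- Signature for (un)curried applicative systems: `none` is the binary
application symbol `∘`, and `some (c, i)` is the symbol `c_i` of arity `i`
(with `c_0 = c` an applicative constant). -/
abbrev USig (C : Type) := Option (C × ℕ)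

/-- Arity function for `USig`. -/
def uar {C : Type} : USig C → ℕ
  | none => 2
  | some (_, i) => i

/-- Terms over the signature `USig C` (variables are natural numbers). -/
abbrev ATerm (C : Type) := Term (USig C) uar ℕ

variable {C : Type}

/-- Binary application `s ∘ t`. -/
def appT (s t : ATerm C) : ATerm C :=
  .app none (fun i => if i.1 = 0 then s else t)

/-- The applicative constant `c` (i.e. `c_0`). -/
def constT (c : C) : ATerm C :=
  .app (some (c, 0)) (fun i => (Nat.not_lt_zero _ i.isLt).elim)

/-- Symbols of a purely applicative term: only `∘` and constants `c_0`. -/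
def ApplicativeSym : USig C → Prop
  | none => True
  | some (_, i) => i = 0

/-- A term over the applicative signature (constants plus `∘`). -/
def ApplicativeT (t : ATerm C) : Prop :=
  ∀ (u : ATerm C) (f : USig C) (ts : Fin (uar f) → ATerm C),
    Subterm u t → u = Term.app f ts → ApplicativeSym f

/-- `headCount t = some (c, n)` iff `t = c ∘ t₁ ∘ ⋯ ∘ tₙ` for some terms `tᵢ`. -/
def headCount : ATerm C → Option (C × ℕ)
  | .var _ => none
  | .app none ts => (headCount (ts ⟨0, by simp [uar]⟩)).map (fun p => (p.1, p.2 + 1))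
  | .app (some (_, _ + 1)) _ => none
  | .app (some (c, 0)) _ => some (c, 0)

/-- The spine `c ∘ t₁ ∘ ⋯ ∘ tₙ` occurs as a subterm of a left- or
right-hand side of `R`. -/
def SpineIn (R : Set (ATerm C × ATerm C)) (c : C) (n : ℕ) : Prop :=
  ∃ p ∈ R, ∃ t : ATerm C, (Subterm t p.1 ∨ Subterm t p.2) ∧ headCount t = some (c, n)

/-- `aa` is the applicative-arity function of `R`: `aa c` is the maximal `n`
such that `c ∘ t₁ ∘ ⋯ ∘ tₙ` occurs in a rule of `R` (and `0` if `c` does not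
occur applied). -/
def AASpec (R : Set (ATerm C × ATerm C)) (aa : C → ℕ) : Prop :=
  ∀ c : C, (∀ n, SpineIn R c n → n ≤ aa c) ∧ (aa c = 0 ∨ SpineIn R c (aa c))

/-- A term is head variable free if no subterm is of the form `x ∘ v` with
`x` a variable. -/
def HeadVarFree (t : ATerm C) : Prop :=
  ∀ u : ATerm C, Subterm u t → ∀ (x : ℕ) (v : ATerm C), u ≠ appT (.var x) v

/-- Basic well-formedness of an applicative TRS: left-hand sides are not
variables, right-hand side variables occur on the left, and both sides are
applicative terms. -/
def IsATRS (R : Set (ATerm C × ATerm C)) : Prop :=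
  ∀ p ∈ R, (∀ x : ℕ, p.1 ≠ Term.var x) ∧
    (∀ x : ℕ, Subterm (.var x) p.2 → Subterm (.var x) p.1) ∧
    ApplicativeT p.1 ∧ ApplicativeT p.2

/-- `R` is left head variable free. -/
def LHVF (R : Set (ATerm C × ATerm C)) : Prop := ∀ p ∈ R, HeadVarFree p.1

/-- The variables `x_0, …, x_{i-1}`. -/
def uvars (i : ℕ) : Fin i → ATerm C := fun j => .var j.1

/-- The term `f_i(x_0,…,x_{i-1})`. -/
def fiT (c : C) (i : ℕ) : ATerm C := .app (some (c, i)) (fun j => .var j.1)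

/-- The uncurrying system `U`, with rules
`c_i(x_1,…,x_i) ∘ y → c_{i+1}(x_1,…,x_i,y)` for all `0 ≤ i < aa c`. -/
def USys (aa : C → ℕ) : Set (ATerm C × ATerm C) :=
  { p | ∃ (c : C) (i : ℕ), i < aa c ∧
      p = (appT (fiT c i) (.var i), fiT c (i + 1)) }

/-- The currying system `C(F)` (for a signature with arities `arF`), with
rules `f_{i+1}(x_1,…,x_i,y) → f_i(x_1,…,x_i) ∘ y` for all `0 ≤ i < arF f`
(where `f_{arF f}` plays the role of `f`). -/
def CurrySys {F : Type} (arF : F → ℕ) : Set (ATerm F × ATerm F) :=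
  { p | ∃ (f : F) (i : ℕ), i < arF f ∧
      p = (fiT f (i + 1), appT (fiT f i) (.var i)) }

/-- The η-saturation `R_η` of `R` (w.r.t. applicative arities `aa`). -/
inductive Eta (aa : C → ℕ) (R : Set (ATerm C × ATerm C)) : ATerm C × ATerm C → Prop where
  | base (p) : p ∈ R → Eta aa R p
  | eta (l r : ATerm C) (c : C) (n x : ℕ) :
      Eta aa R (l, r) → headCount l = some (c, n) → n < aa c →
      ¬ Subterm (.var x) l → ¬ Subterm (.var x) r →
      Eta aa R (appT l (.var x), appT r (.var x))

/-- The uncurried system `R_η↓`: the rules of `R_η` with both sides in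
`U`-normal form. -/
def EtaDown (aa : C → ℕ) (R : Set (ATerm C × ATerm C)) : Set (ATerm C × ATerm C) :=
  { p | ∃ l r : ATerm C, Eta aa R (l, r) ∧
      NormTo (USys aa) l p.1 ∧ NormTo (USys aa) r p.2 }

/-- The transformed system `U↓(R) = R_η↓ ∪ U(R)`. -/
def UD (aa : C → ℕ) (R : Set (ATerm C × ATerm C)) : Set (ATerm C × ATerm C) :=
  EtaDown aa R ∪ USys aa

/-- Symbols of the signature of `U↓(R)`: `∘` and `c_i` with `i ≤ aa c`. -/
def GoodSym (aa : C → ℕ) : USig C → Prop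
  | none => True
  | some (c, i) => i ≤ aa c

/-- A term over the signature of `U↓(R)`. -/
def GoodTerm (aa : C → ℕ) (t : ATerm C) : Prop :=
  ∀ (u : ATerm C) (f : USig C) (ts : Fin (uar f) → ATerm C),
    Subterm u t → u = Term.app f ts → GoodSym aa f

/-- `C'`: curry a term over the signature of `U↓(R)` and identify all
symbols `c_i` originating from the same constant `c`. -/
def curryId : ATerm C → ATerm C
  | .var x => .var x
  | .app none ts => appT (curryId (ts ⟨0, by simp [uar]⟩)) (curryId (ts ⟨1, by simp [uar]⟩))
  | .app (some (c, i)) ts =>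
      (List.ofFn (fun j : Fin (uar (some (c, i))) => curryId (ts j))).foldl appT (constT c)

end ATRS

/-- The rewrite relation `→_{R/S} = →*_S · →_R · →*_S` of a relative TRS. -/
def RelStep {F V : Type} {ar : F → ℕ} (R S : Set (Term F ar V × Term F ar V)) :
    Term F ar V → Term F ar V → Prop :=
  fun s t => ∃ a b, RStar S s a ∧ Rew R a b ∧ RStar S b t
section Basic

variable {F V : Type} {ar : F → ℕ}

theorem Term.size_pos (t : Term F ar V) : 0 < t.size := by
  cases t <;> simp [Term.size]

theorem Term.subst_subst (t : Term F ar V) (σ τ : V → Term F ar V) :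
    (t.subst σ).subst τ = t.subst (fun x => (σ x).subst τ) := by
  induction t with
  | var x => rfl
  | app f ts ih =>
      simp only [Term.subst]
      congr 1
      funext i
      exact ih i

theorem subterm_trans {b c : Term F ar V} (h2 : Subterm b c) :
    ∀ a, Subterm a b → Subterm a c := by
  induction h2 with
  | refl t => exact fun a h => h
  | app f ts i u h ih => exact fun a ha => Subterm.app f ts i a (ih a ha)

theorem subterm_var {u : Term F ar V} {x : V} (h : Subterm u (.var x)) : u = .var x := by
  cases h; rfl

theorem subterm_app {u : Term F ar V} {f : F} {ts : Fin (ar f) → Term F ar V}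
    (h : Subterm u (.app f ts)) : u = .app f ts ∨ ∃ i, Subterm u (ts i) := by
  cases h with
  | refl => exact Or.inl rfl
  | app f ts i u h => exact Or.inr ⟨i, h⟩

theorem update_subst {n : F} (ts : Fin (ar n) → Term F ar V) (i : Fin (ar n))
    (u : Term F ar V) (τ : V → Term F ar V) :
    (fun j => ((Function.update ts i u) j).subst τ) =
      Function.update (fun j => (ts j).subst τ) i (u.subst τ) := by
  funext j
  by_cases hj : j = i
  · subst hj; simp
  · simp [Function.update_of_ne hj]

theorem Rew.substc {R : Set (Term F ar V × Term F ar V)} {s t : Term F ar V}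
    (h : Rew R s t) (τ : V → Term F ar V) : Rew R (s.subst τ) (t.subst τ) := by
  induction h with
  | rule l r σ hm =>
      rw [Term.subst_subst, Term.subst_subst]
      exact Rew.rule l r _ hm
  | congr f ts i u h ih =>
      simp only [Term.subst]
      rw [update_subst]
      exact Rew.congr (R := R) f (fun j => (ts j).subst τ) i (u.subst τ) ih

theorem RStar.substc {R : Set (Term F ar V × Term F ar V)} {s t : Term F ar V}
    (h : RStar R s t) (τ : V → Term F ar V) : RStar R (s.subst τ) (t.subst τ) := by
  induction h with
  | refl => exact Relation.ReflTransGen.refl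
  | tail h2 h3 ih => exact ih.tail (h3.substc τ)

theorem rstar_congr {X : Set (Term F ar V × Term F ar V)} {f : F}
    {ts : Fin (ar f) → Term F ar V} {i : Fin (ar f)} {u : Term F ar V}
    (h : RStar X (ts i) u) : RStar X (.app f ts) (.app f (Function.update ts i u)) := by
  induction h with
  | refl =>
      rw [Function.update_eq_self]
      exact Relation.ReflTransGen.refl
  | tail h2 h3 ih =>
      rename_i b c
      refine ih.tail ?_
      have hstep : Rew X ((Function.update ts i b) i) c := by
        rwa [Function.update_self]
      have := Rew.congr f (Function.update ts i b) i c hstep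
      rwa [Function.update_idem] at this

theorem subst_congr_of {t : Term F ar V} {σ σ' : V → Term F ar V}
    (h : ∀ y, Subterm (.var y) t → σ y = σ' y) : t.subst σ = t.subst σ' := by
  induction t with
  | var x => exact h x (Subterm.refl _)
  | app f ts ih =>
      simp only [Term.subst]
      congr 1
      funext i
      exact ih i (fun y hy => h y (Subterm.app f ts i _ hy))

end Basic
section CurryBasic

variable {C : Type}

theorem fin2_elim (i : Fin (uar (none : USig C))) :
    i = (⟨0, by simp [uar]⟩ : Fin (uar (none : USig C))) ∨
    i = (⟨1, by simp [uar]⟩ : Fin (uar (none : USig C))) := by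
  rcases i with ⟨iv, hi⟩
  have h2 : iv < 2 := hi
  interval_cases iv
  · exact Or.inl rfl
  · exact Or.inr rfl

theorem app_none_eq_appT (ts : Fin (uar (none : USig C)) → ATerm C) :
    Term.app none ts = appT (ts ⟨0, by simp [uar]⟩) (ts ⟨1, by simp [uar]⟩) := by
  unfold appT
  congr 1
  funext i
  rcases fin2_elim i with h | h <;> subst h <;> simp

theorem appT_inj {a b a' b' : ATerm C} (h : appT a b = appT a' b') : a = a' ∧ b = b' := by
  unfold appT at h
  injection h with _ h2
  constructor
  · have := congrFun h2 ⟨0, by simp [uar]⟩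
    simpa using this
  · have := congrFun h2 ⟨1, by simp [uar]⟩
    simpa using this

theorem subst_appT (a b : ATerm C) (σ : ℕ → ATerm C) :
    (appT a b).subst σ = appT (a.subst σ) (b.subst σ) := by
  show Term.app none _ = _
  unfold appT
  congr 1
  funext i
  rcases fin2_elim i with h | h <;> subst h <;> simp

theorem constT_eq {c : C} (ts : Fin (uar (some (c, 0))) → ATerm C) :
    Term.app (some (c, 0)) ts = constT c := by
  unfold constT
  congr 1
  funext i
  exact absurd i.isLt (by simp [uar])

theorem subst_constT (c : C) (σ : ℕ → ATerm C) : (constT c).subst σ = constT c := by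
  show Term.app (some (c, 0)) _ = _
  exact constT_eq _

theorem subst_fiT (c : C) (i : ℕ) (σ : ℕ → ATerm C) :
    (fiT c i).subst σ = Term.app (some (c, i)) (fun j => σ j.1) := by
  rfl

theorem curryId_appT (a b : ATerm C) :
    curryId (appT a b) = appT (curryId a) (curryId b) := by
  unfold appT
  rw [curryId]
  simp
  rfl

theorem curryId_constT (c : C) : curryId (constT c) = constT c := rfl

theorem rew_appT_left {X : Set (ATerm C × ATerm C)} {a a' : ATerm C} (b : ATerm C)
    (h : Rew X a a') : Rew X (appT a b) (appT a' b) := by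
  have := Rew.congr (R := X) none (fun i => if i.1 = 0 then a else b) ⟨0, by simp [uar]⟩ a'
    (by simpa using h)
  unfold appT
  convert this using 2
  funext i
  rcases fin2_elim i with h | h <;> subst h <;> simp [Function.update, Fin.ext_iff]

theorem rew_appT_right {X : Set (ATerm C × ATerm C)} {b b' : ATerm C} (a : ATerm C)
    (h : Rew X b b') : Rew X (appT a b) (appT a b') := by
  have := Rew.congr (R := X) none (fun i => if i.1 = 0 then a else b) ⟨1, by simp [uar]⟩ b'
    (by simpa using h)
  unfold appT
  convert this using 2
  funext i
  rcases fin2_elim i with h | h <;> subst h <;> simp [Function.update, Fin.ext_iff]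

theorem rstar_appT_left {X : Set (ATerm C × ATerm C)} {a a' : ATerm C} (b : ATerm C)
    (h : RStar X a a') : RStar X (appT a b) (appT a' b) := by
  induction h with
  | refl => exact .refl
  | tail h2 h3 ih => exact ih.tail (rew_appT_left b h3)

theorem rstar_appT_right {X : Set (ATerm C × ATerm C)} {b b' : ATerm C} (a : ATerm C)
    (h : RStar X b b') : RStar X (appT a b) (appT a b') := by
  induction h with
  | refl => exact .refl
  | tail h2 h3 ih => exact ih.tail (rew_appT_right a h3)

theorem rstar_appT {X : Set (ATerm C × ATerm C)} {a a' b b' : ATerm C}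
    (ha : RStar X a a') (hb : RStar X b b') : RStar X (appT a b) (appT a' b') :=
  (rstar_appT_left b ha).trans (rstar_appT_right a' hb)

end CurryBasic
section CurryMore

variable {C : Type}

theorem curryId_app_none (ts : Fin (uar (none : USig C)) → ATerm C) :
    curryId (Term.app none ts) =
      appT (curryId (ts ⟨0, by simp [uar]⟩)) (curryId (ts ⟨1, by simp [uar]⟩)) := by
  rw [curryId]

theorem curryId_app_some (c : C) (i : ℕ) (ts : Fin (uar (some (c, i))) → ATerm C) :
    curryId (Term.app (some (c, i)) ts) =
      (List.ofFn (fun j : Fin (uar (some (c, i))) => curryId (ts j))).foldl appT (constT c) := by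
  rw [curryId]

theorem subst_foldl_appT (L : List (ATerm C)) (z : ATerm C) (σ : ℕ → ATerm C) :
    (L.foldl appT z).subst σ = (L.map (Term.subst σ)).foldl appT (z.subst σ) := by
  induction L generalizing z with
  | nil => rfl
  | cons a L ih => simp only [List.foldl, List.map, ih, subst_appT]

theorem curryId_subst (t : ATerm C) (σ : ℕ → ATerm C) :
    curryId (t.subst σ) = (curryId t).subst (fun x => curryId (σ x)) := by
  induction t with
  | var x => rfl
  | app f ts ih =>
      obtain _ | ⟨c, i⟩ := f
      · show curryId (Term.app none fun i => (ts i).subst σ) = _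
        rw [curryId_app_none, curryId_app_none, subst_appT]
        simp only [ih]
      · show curryId (Term.app (some (c, i)) fun j => (ts j).subst σ) = _
        rw [curryId_app_some, curryId_app_some, subst_foldl_appT, subst_constT,
          List.map_ofFn]
        simp only [ih, Function.comp_def]

theorem applicativeT_subterm {t u : ATerm C} (h : ApplicativeT t) (hu : Subterm u t) :
    ApplicativeT u :=
  fun v f ts hv he => h v f ts (subterm_trans hu v hv) he

theorem applicativeT_arg {f : USig C} {ts : Fin (uar f) → ATerm C}
    (h : ApplicativeT (Term.app f ts)) (i : Fin (uar f)) : ApplicativeT (ts i) :=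
  applicativeT_subterm h (Subterm.app f ts i _ (Subterm.refl _))

theorem curryId_eq_self {t : ATerm C} (h : ApplicativeT t) : curryId t = t := by
  induction t with
  | var x => rfl
  | app f ts ih =>
      obtain _ | ⟨c, i⟩ := f
      · rw [curryId_app_none, ih _ (applicativeT_arg h _), ih _ (applicativeT_arg h _)]
        exact (app_none_eq_appT ts).symm
      · have hi : ApplicativeSym (some (c, i)) := h _ _ ts (Subterm.refl _) rfl
        have hi0 : i = 0 := hi
        subst hi0
        rw [curryId_app_some]
        rw [show (List.ofFn fun j : Fin (uar (some (c, 0))) => curryId (ts j)) = [] from by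
          apply List.eq_nil_of_length_eq_zero; simp [uar]]
        exact (constT_eq ts).symm

theorem applicative_var (x : ℕ) : ApplicativeT (.var x : ATerm C) := by
  intro u f ts hu he
  rw [subterm_var hu] at he
  cases he

theorem applicative_appT {a b : ATerm C} (ha : ApplicativeT a) (hb : ApplicativeT b) :
    ApplicativeT (appT a b) := by
  intro u f ts hu he
  rcases subterm_app (hu : Subterm u (Term.app none _)) with h | ⟨i, hi⟩
  · subst h
    injection he with hf
    subst hf
    trivial
  · rcases fin2_elim i with h | h <;> subst h
    · exact ha u f ts (by simpa using hi) he
    · exact hb u f ts (by simpa using hi) he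

theorem applicative_constT (c : C) : ApplicativeT (constT c) := by
  intro u f ts hu he
  rcases subterm_app (hu : Subterm u (Term.app (some (c, 0)) _)) with h | ⟨i, hi⟩
  · subst h
    injection he with hf
    subst hf
    exact rfl
  · exact absurd i.isLt (by simp [uar])

theorem applicative_foldl {L : List (ATerm C)} {z : ATerm C} (hz : ApplicativeT z)
    (hL : ∀ u ∈ L, ApplicativeT u) : ApplicativeT (L.foldl appT z) := by
  induction L generalizing z with
  | nil => exact hz
  | cons a L ih =>
      exact ih (applicative_appT hz (hL a (by simp))) (fun u hu => hL u (by simp [hu]))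

theorem curryId_applicative (t : ATerm C) : ApplicativeT (curryId t) := by
  induction t with
  | var x => exact applicative_var x
  | app f ts ih =>
      obtain _ | ⟨c, i⟩ := f
      · rw [curryId_app_none]
        exact applicative_appT (ih _) (ih _)
      · rw [curryId_app_some]
        refine applicative_foldl (applicative_constT c) ?_
        intro u hu
        rw [List.mem_ofFn] at hu
        obtain ⟨j, rfl⟩ := hu
        exact ih j

theorem size_appT (a b : ATerm C) : (appT a b).size = 1 + a.size + b.size := by
  have h : (appT a b).size
      = 1 + ∑ i : Fin 2, (if (i : ℕ) = 0 then a else b).size := rfl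
  rw [h, Fin.sum_univ_two]
  simp
  omega

theorem size_constT (c : C) : (constT c).size = 1 := by
  have h : (constT c).size = 1 + ∑ i : Fin 0,
      (((fun i : Fin (uar (some (c,0))) => (Nat.not_lt_zero _ i.isLt).elim) : Fin 0 → ATerm C) i).size := rfl
  rw [h]
  simp

theorem size_foldl (L : List (ATerm C)) (z : ATerm C) :
    (L.foldl appT z).size = z.size + (L.map (fun u => 1 + u.size)).sum := by
  induction L generalizing z with
  | nil => simp
  | cons a L ih => simp [List.foldl, ih, size_appT]; omega

theorem curryId_size (t : ATerm C) : (curryId t).size + 1 ≤ 2 * t.size := by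
  induction t with
  | var x => simp [curryId, Term.size]
  | app f ts ih =>
      obtain _ | ⟨c, i⟩ := f
      · rw [curryId_app_none, size_appT]
        have h0 := ih ⟨0, by simp [uar]⟩
        have h1 := ih ⟨1, by simp [uar]⟩
        have hs : (Term.app (none : USig C) ts).size
            = 1 + ((ts ⟨0, by simp [uar]⟩).size + (ts ⟨1, by simp [uar]⟩).size) := by
          have : (Term.app (none : USig C) ts).size = 1 + ∑ i : Fin 2, (ts i).size := rfl
          rw [this, Fin.sum_univ_two]
          rfl
        omega
      · rw [curryId_app_some, size_foldl, size_constT]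
        have hmap : ((List.ofFn fun j : Fin (uar (some (c, i))) => curryId (ts j)).map
            (fun u => 1 + u.size)).sum = ∑ j : Fin (uar (some (c, i))), (1 + (curryId (ts j)).size) := by
          rw [List.map_ofFn, List.sum_ofFn]
          rfl
        rw [hmap]
        have hs : (Term.app (some (c, i)) ts).size = 1 + ∑ j, (ts j).size := rfl
        rw [hs]
        have hb : ∑ j : Fin (uar (some (c, i))), (1 + (curryId (ts j)).size)
            ≤ ∑ j : Fin (uar (some (c, i))), (2 * (ts j).size) := by
          refine Finset.sum_le_sum fun j _ => ?_
          have := ih j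
          omega
        have : (2 : ℕ) * (1 + ∑ j, (ts j).size) = 2 + ∑ j, 2 * (ts j).size := by
          rw [Nat.mul_add, Finset.mul_sum]
        omega

end CurryMore
section Proj

variable {C : Type}

theorem update_comp {α β : Type*} {k : ℕ} (g : α → β) (ts : Fin k → α) (i : Fin k) (u : α) :
    (fun j => g (Function.update ts i u j)) = Function.update (fun j => g (ts j)) i (g u) := by
  funext j
  by_cases hj : j = i
  · subst hj; simp
  · simp [Function.update_of_ne hj]

theorem rew_foldl_left {X : Set (ATerm C × ATerm C)} {z z' : ATerm C} (L : List (ATerm C))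
    (h : Rew X z z') : Rew X (L.foldl appT z) (L.foldl appT z') := by
  induction L generalizing z z' with
  | nil => exact h
  | cons a L ih => exact ih (rew_appT_left a h)

theorem rstar_foldl_left {X : Set (ATerm C × ATerm C)} {z z' : ATerm C} (L : List (ATerm C))
    (h : RStar X z z') : RStar X (L.foldl appT z) (L.foldl appT z') := by
  induction h with
  | refl => exact .refl
  | tail h2 h3 ih => exact ih.tail (rew_foldl_left L h3)

theorem ofFn_update {k : ℕ} (f : Fin k → ATerm C) (i : Fin k) (v : ATerm C) :
    List.ofFn (Function.update f i v) = (List.ofFn f).set i.1 v := by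
  apply List.ext_getElem
  · simp
  · intro j h1 h2
    simp only [List.getElem_ofFn, List.getElem_set]
    by_cases hj : (i : ℕ) = j
    · rw [if_pos hj]
      have he : (⟨j, by simpa using h1⟩ : Fin k) = i := Fin.ext hj.symm
      rw [he, Function.update_self]
    · rw [if_neg hj, Function.update_of_ne (fun hc => hj (by rw [← hc]))]

theorem rew_foldl_at {X : Set (ATerm C × ATerm C)} :
    ∀ (L : List (ATerm C)) (z : ATerm C) (j : ℕ) (hj : j < L.length) (b : ATerm C),
      Rew X (L.get ⟨j, hj⟩) b → Rew X (L.foldl appT z) ((L.set j b).foldl appT z) := by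
  intro L
  induction L with
  | nil => intro z j hj; simp at hj
  | cons a L ih =>
      intro z j hj b hr
      cases j with
      | zero =>
          simp only [List.set]
          exact rew_foldl_left L (rew_appT_right z (by simpa using hr))
      | succ j =>
          simp only [List.set]
          exact ih (appT z a) j (by simpa using hj) b (by simpa using hr)

theorem curry_fiT_subst (c : C) (i : ℕ) (σ : ℕ → ATerm C) :
    curryId ((fiT c i).subst σ) =
      (List.ofFn (fun j : Fin i => curryId (σ j.1))).foldl appT (constT c) := by
  rw [subst_fiT, curryId_app_some]
  rfl

theorem curry_usys_rule {c : C} {i : ℕ} (σ : ℕ → ATerm C) :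
    curryId ((appT (fiT c i) (.var i)).subst σ) = curryId ((fiT c (i + 1)).subst σ) := by
  rw [subst_appT, curryId_appT, curry_fiT_subst, curry_fiT_subst]
  show appT _ (curryId ((Term.var i).subst σ)) = _
  have : ((Term.var i : ATerm C).subst σ) = σ i := rfl
  rw [this]
  rw [show (List.ofFn fun j : Fin (i+1) => curryId (σ j.1)) =
    (List.ofFn fun j : Fin i => curryId (σ j.1)).concat (curryId (σ i)) from by
      rw [List.ofFn_succ']
      rfl]
  rw [List.concat_eq_append, List.foldl_append, List.foldl_cons, List.foldl_nil]

theorem curry_update {f : USig C} {ts : Fin (uar f) → ATerm C} {i : Fin (uar f)}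
    {u : ATerm C} (h : curryId u = curryId (ts i)) :
    curryId (Term.app f (Function.update ts i u)) = curryId (Term.app f ts) := by
  have key : ∀ j, curryId (Function.update ts i u j) = curryId (ts j) := by
    intro j
    by_cases hj : j = i
    · subst hj; rw [Function.update_self, h]
    · rw [Function.update_of_ne hj]
  obtain _ | ⟨c, k⟩ := f
  · rw [curryId_app_none, curryId_app_none, key, key]
  · rw [curryId_app_some, curryId_app_some]
    congr 1
    exact congrArg List.ofFn (funext key)

theorem curry_ustep {aa : C → ℕ} {s t : ATerm C} (h : Rew (USys aa) s t) :
    curryId s = curryId t := by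
  induction h with
  | rule l r σ hm =>
      obtain ⟨c, i, hi, hp⟩ := hm
      have hl : l = appT (fiT c i) (.var i) := congrArg Prod.fst hp
      have hr : r = fiT c (i + 1) := congrArg Prod.snd hp
      subst hl hr
      exact curry_usys_rule σ
  | congr f ts i u h ih => exact (curry_update ih.symm).symm

theorem curry_ustar {aa : C → ℕ} {s t : ATerm C} (h : RStar (USys aa) s t) :
    curryId s = curryId t := by
  induction h with
  | refl => rfl
  | tail h2 h3 ih => exact ih.trans (curry_ustep h3)

theorem eta_curry {aa : C → ℕ} {R : Set (ATerm C × ATerm C)} (hR : IsATRS R) :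
    ∀ p : ATerm C × ATerm C, Eta aa R p → ∀ τ : ℕ → ATerm C,
      Rew R ((curryId p.1).subst τ) ((curryId p.2).subst τ) := by
  intro p h
  induction h with
  | base p hp =>
      intro τ
      rw [curryId_eq_self (hR p hp).2.2.1, curryId_eq_self (hR p hp).2.2.2]
      have := Rew.rule p.1 p.2 τ (by simpa using hp)
      exact this
  | eta l r c n x h hc hn hx1 hx2 ih =>
      intro τ
      show Rew R ((curryId (appT l (.var x))).subst τ) ((curryId (appT r (.var x))).subst τ)
      rw [curryId_appT, curryId_appT]
      have hv : curryId (Term.var x : ATerm C) = Term.var x := rfl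
      rw [hv, subst_appT, subst_appT]
      exact rew_appT_left _ (ih τ)

theorem rew_curry_update {R : Set (ATerm C × ATerm C)} {f : USig C}
    {ts : Fin (uar f) → ATerm C} {i : Fin (uar f)} {u : ATerm C}
    (h : Rew R (curryId (ts i)) (curryId u)) :
    Rew R (curryId (Term.app f ts)) (curryId (Term.app f (Function.update ts i u))) := by
  obtain _ | ⟨c, k⟩ := f
  · rw [curryId_app_none, curryId_app_none]
    rcases fin2_elim i with hi | hi <;> subst hi
    · rw [Function.update_self]
      rw [Function.update_of_ne (by intro hc; exact absurd (Fin.ext_iff.mp hc) (by simp))]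
      exact rew_appT_left _ h
    · rw [Function.update_self]
      rw [Function.update_of_ne (by intro hc; exact absurd (Fin.ext_iff.mp hc) (by simp))]
      exact rew_appT_right _ h
  · rw [curryId_app_some, curryId_app_some]
    rw [update_comp curryId ts i u, ofFn_update]
    refine rew_foldl_at _ _ i.1 (by simp) _ ?_
    rw [List.get_ofFn]
    simpa using h

theorem proj_rew {aa : C → ℕ} {R : Set (ATerm C × ATerm C)} (hR : IsATRS R)
    {s t : ATerm C} (h : Rew (EtaDown aa R) s t) : Rew R (curryId s) (curryId t) := by
  induction h with
  | rule l r σ hm =>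
      obtain ⟨l0, r0, hEta, ⟨hl, _⟩, ⟨hr, _⟩⟩ := hm
      rw [curryId_subst, curryId_subst, ← curry_ustar hl, ← curry_ustar hr]
      exact eta_curry hR (l0, r0) hEta _
  | congr f ts i u h ih => exact rew_curry_update ih

theorem proj_relstep {aa : C → ℕ} {R : Set (ATerm C × ATerm C)} (hR : IsATRS R)
    {s t : ATerm C} (h : RelStep (EtaDown aa R) (USys aa) s t) :
    Rew R (curryId s) (curryId t) := by
  obtain ⟨a, b, ha, hab, hb⟩ := h
  rw [curry_ustar ha, ← curry_ustar hb]
  exact proj_rew hR hab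

theorem proj_relpow {aa : C → ℕ} {R : Set (ATerm C × ATerm C)} (hR : IsATRS R) :
    ∀ (m : ℕ) {s t : ATerm C}, RelPow (RelStep (EtaDown aa R) (USys aa)) m s t →
      RelPow (Rew R) m (curryId s) (curryId t) := by
  intro m
  induction m with
  | zero => intro s t h; exact congrArg curryId h
  | succ m ih =>
      rintro s t ⟨b, hb, hrest⟩
      exact ⟨curryId b, proj_relstep hR hb, ih hrest⟩

end Proj
section DownDef

variable {C : Type}

/-- Uncurrying application. -/
def applyU (aa : C → ℕ) : ATerm C → ATerm C → ATerm C
  | .app (some (c, i)) ts, b =>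
      if _ : i < aa c then
        .app (some (c, i + 1)) (fun j : Fin (uar (some (c, i + 1))) =>
          if hj : (j : ℕ) < i then ts ⟨j, hj⟩ else b)
      else appT (.app (some (c, i)) ts) b
  | a, b => appT a b

/-- Full uncurrying (the `U`-normal form). -/
def down (aa : C → ℕ) : ATerm C → ATerm C
  | .var x => .var x
  | .app none ts => applyU aa (down aa (ts ⟨0, by simp [uar]⟩)) (down aa (ts ⟨1, by simp [uar]⟩))
  | .app (some p) ts => .app (some p) (fun j => down aa (ts j))

variable {aa : C → ℕ}

theorem applyU_var (x : ℕ) (b : ATerm C) : applyU aa (.var x) b = appT (.var x) b := rfl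

theorem applyU_none (ts : Fin (uar (none : USig C)) → ATerm C) (b : ATerm C) :
    applyU aa (.app none ts) b = appT (.app none ts) b := rfl

theorem applyU_some (c : C) (i : ℕ) (ts : Fin (uar (some (c, i))) → ATerm C) (b : ATerm C) :
    applyU aa (.app (some (c, i)) ts) b =
      if _ : i < aa c then
        .app (some (c, i + 1)) (fun j : Fin (uar (some (c, i + 1))) =>
          if hj : (j : ℕ) < i then ts ⟨j, hj⟩ else b)
      else appT (.app (some (c, i)) ts) b := rfl

theorem applyU_ne_var (a b : ATerm C) (x : ℕ) : applyU aa a b ≠ .var x := by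
  rcases a with y | ⟨f | ⟨c, i⟩, ts⟩
  · simp [applyU_var, appT]
  · simp [applyU_none, appT]
  · rw [applyU_some]
    split
    · simp
    · simp [appT]

theorem down_var (x : ℕ) : down aa (.var x : ATerm C) = .var x := rfl

theorem down_app_none (ts : Fin (uar (none : USig C)) → ATerm C) :
    down aa (.app none ts) =
      applyU aa (down aa (ts ⟨0, by simp [uar]⟩)) (down aa (ts ⟨1, by simp [uar]⟩)) := by
  rw [down]

theorem down_app_some (p : C × ℕ) (ts : Fin (uar (some p)) → ATerm C) :
    down aa (.app (some p) ts) = .app (some p) (fun j => down aa (ts j)) := by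
  rw [down]

theorem down_appT (a b : ATerm C) :
    down aa (appT a b) = applyU aa (down aa a) (down aa b) := by
  show down aa (Term.app none _) = _
  rw [down_app_none]
  simp

theorem down_ne_var {t : ATerm C} (h : ∀ y, t ≠ .var y) (x : ℕ) :
    down aa t ≠ .var x := by
  rcases t with y | ⟨f | p, ts⟩
  · exact absurd rfl (h y)
  · rw [down_app_none]; exact applyU_ne_var _ _ x
  · rw [down_app_some]; simp

theorem applyU_subst {a : ATerm C} (ha : ∀ x, a ≠ .var x) (b : ATerm C) (σ : ℕ → ATerm C) :
    (applyU aa a b).subst σ = applyU aa (a.subst σ) (b.subst σ) := by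
  rcases a with y | ⟨f | ⟨c, i⟩, ts⟩
  · exact absurd rfl (ha y)
  · rw [applyU_none, subst_appT]
    rfl
  · rw [applyU_some]
    have hsub : (Term.app (some (c, i)) ts).subst σ
        = Term.app (some (c, i)) (fun j => (ts j).subst σ) := rfl
    split
    · rename_i h
      rw [hsub, applyU_some, dif_pos h]
      show Term.app _ _ = Term.app _ _
      congr 1
      funext j
      by_cases hj : (j : ℕ) < i
      · rw [dif_pos hj]
        show ((if hj : (j : ℕ) < i then ts ⟨j, hj⟩ else b).subst σ) = _
        rw [dif_pos hj]
      · rw [dif_neg hj]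
        show ((if hj : (j : ℕ) < i then ts ⟨j, hj⟩ else b).subst σ) = _
        rw [dif_neg hj]
    · rename_i h
      rw [subst_appT, hsub, applyU_some, dif_neg h]

end DownDef

section HVF

variable {C : Type} {aa : C → ℕ}

theorem hvf_subterm {t u : ATerm C} (h : HeadVarFree t) (hu : Subterm u t) :
    HeadVarFree u :=
  fun v hv x w => h v (subterm_trans hu v hv) x w

theorem hvf_arg {f : USig C} {ts : Fin (uar f) → ATerm C}
    (h : HeadVarFree (Term.app f ts)) (i : Fin (uar f)) : HeadVarFree (ts i) :=
  hvf_subterm h (Subterm.app f ts i _ (Subterm.refl _))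

theorem hvf_head_ne_var {ts : Fin (uar (none : USig C)) → ATerm C}
    (h : HeadVarFree (Term.app none ts)) (x : ℕ) : ts ⟨0, by simp [uar]⟩ ≠ .var x := by
  intro hc
  refine h (Term.app none ts) (Subterm.refl _) x (ts ⟨1, by simp [uar]⟩) ?_
  rw [app_none_eq_appT ts, hc]

theorem down_subst {l : ATerm C} (h : HeadVarFree l) (σ : ℕ → ATerm C) :
    down aa (l.subst σ) = (down aa l).subst (fun x => down aa (σ x)) := by
  induction l with
  | var x => rfl
  | app f ts ih =>
      obtain _ | p := f
      · have hsub : (Term.app (none : USig C) ts).subst σ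
            = Term.app none (fun j => (ts j).subst σ) := rfl
        rw [hsub, down_app_none, down_app_none]
        show applyU aa (down aa ((ts _).subst σ)) (down aa ((ts _).subst σ)) = _
        rw [ih _ (hvf_arg h _), ih _ (hvf_arg h _)]
        rw [applyU_subst (down_ne_var (fun y hy => hvf_head_ne_var h y hy)) _ _]
      · have hsub : (Term.app (some p) ts).subst σ
            = Term.app (some p) (fun j => (ts j).subst σ) := rfl
        rw [hsub, down_app_some, down_app_some]
        show Term.app _ (fun j => down aa ((ts j).subst σ)) = Term.app _ _
        congr 1
        funext j
        rw [ih j (hvf_arg h j)]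

end HVF
section DownNF

theorem rstar_congr_all {F V : Type} {ar : F → ℕ} {X : Set (Term F ar V × Term F ar V)}
    {f : F} (ts us : Fin (ar f) → Term F ar V) (h : ∀ i, RStar X (ts i) (us i)) :
    RStar X (.app f ts) (.app f us) := by
  suffices key : ∀ (m : ℕ) (ts : Fin (ar f) → Term F ar V),
      (∀ i, RStar X (ts i) (us i)) → (∀ i : Fin (ar f), m ≤ (i : ℕ) → ts i = us i) →
      RStar X (.app f ts) (.app f us) by
    exact key (ar f) ts h (fun i hi => absurd i.isLt (by omega))
  intro m
  induction m with
  | zero =>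
      intro ts h1 h2
      rw [show ts = us from funext fun i => h2 i (Nat.zero_le _)]
      exact .refl
  | succ m ih =>
      intro ts h1 h2
      by_cases hm : m < ar f
      · refine Relation.ReflTransGen.trans (rstar_congr (i := ⟨m, hm⟩) (h1 ⟨m, hm⟩)) (ih _ ?_ ?_)
        · intro i
          by_cases hi : i = ⟨m, hm⟩
          · subst hi; rw [Function.update_self]; exact .refl
          · rw [Function.update_of_ne hi]; exact h1 i
        · intro i hi
          by_cases hie : i = ⟨m, hm⟩
          · subst hie; rw [Function.update_self]
          · rw [Function.update_of_ne hie]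
            refine h2 i ?_
            have : (i : ℕ) ≠ m := fun hc => hie (Fin.ext hc)
            omega
      · exact ih ts h1 (fun i hi => absurd (lt_of_lt_of_le i.isLt (not_lt.mp hm)) (by omega))

variable {C : Type} {aa : C → ℕ}

theorem rstar_appT_applyU (a b : ATerm C) : RStar (USys aa) (appT a b) (applyU aa a b) := by
  rcases a with y | ⟨f | ⟨c, i⟩, ts⟩
  · exact .refl
  · exact .refl
  · rw [applyU_some]
    split
    · rename_i h
      refine Relation.ReflTransGen.single ?_
      have hrule : (appT (fiT c i) (.var i), fiT c (i + 1)) ∈ USys aa := ⟨c, i, h, rfl⟩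
      have step := Rew.rule _ _ (fun k => if hk : k < i then ts ⟨k, hk⟩ else b) hrule
      have e1 : ((appT (fiT c i) (.var i)).subst fun k => if hk : k < i then ts ⟨k, hk⟩ else b)
          = appT (Term.app (some (c, i)) ts) b := by
        rw [subst_appT, subst_fiT]
        congr 1
        · congr 1
          funext j
          have hj : (j : ℕ) < i := j.isLt
          show (if hk : (j : ℕ) < i then ts ⟨j, hk⟩ else b) = ts j
          rw [dif_pos hj]
        · show (if hk : i < i then ts ⟨i, hk⟩ else b) = b
          rw [dif_neg (lt_irrefl i)]
      have e2 : ((fiT c (i + 1)).subst fun k => if hk : k < i then ts ⟨k, hk⟩ else b)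
          = Term.app (some (c, i + 1))
              (fun j : Fin (uar (some (c, i + 1))) =>
                if hj : (j : ℕ) < i then ts ⟨j, hj⟩ else b) := by
        rw [subst_fiT]
      rw [e1, e2] at step
      exact step
    · exact .refl

theorem rstar_down (t : ATerm C) : RStar (USys aa) t (down aa t) := by
  induction t with
  | var x => exact .refl
  | app f ts ih =>
      obtain _ | p := f
      · rw [down_app_none]
        refine Relation.ReflTransGen.trans
          (rstar_congr_all ts (fun i => down aa (ts i)) ih) ?_
        rw [app_none_eq_appT (fun i => down aa (ts i))]
        exact rstar_appT_applyU _ _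
      · rw [down_app_some]
        exact rstar_congr_all ts _ ih

/-- No `U`-redexes. -/
def UFree (aa : C → ℕ) (t : ATerm C) : Prop :=
  ∀ (c : C) (i : ℕ) (us : Fin (uar (some (c, i))) → ATerm C) (b : ATerm C),
    Subterm (appT (.app (some (c, i)) us) b) t → ¬ i < aa c

theorem ufree_subterm {t u : ATerm C} (h : UFree aa t) (hu : Subterm u t) : UFree aa u :=
  fun c i us b hs => h c i us b (subterm_trans hu _ hs)

theorem rew_usys_not_ufree {s u : ATerm C} (h : Rew (USys aa) s u) : ¬ UFree aa s := by
  induction h with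
  | rule l r σ hm =>
      obtain ⟨c, i, hi, hp⟩ := hm
      intro hf
      have hl : l = appT (fiT c i) (.var i) := congrArg Prod.fst hp
      subst hl
      refine hf c i (fun j => σ j.1) (σ i) ?_ hi
      rw [subst_appT, subst_fiT]
      exact Subterm.refl _
  | congr f ts i u h ih =>
      intro hf
      exact ih (ufree_subterm hf (Subterm.app f ts i _ (Subterm.refl _)))

theorem ufree_nf {t : ATerm C} (h : UFree aa t) : NF (USys aa) t :=
  fun u hu => rew_usys_not_ufree hu h

theorem ufree_var (x : ℕ) : UFree aa (.var x) := by
  intro c i us b hs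
  rw [show appT (Term.app (some (c, i)) us) b = Term.app none _ from rfl] at hs
  cases subterm_var hs

theorem ufree_app {f : USig C} {ts : Fin (uar f) → ATerm C}
    (hargs : ∀ i, UFree aa (ts i))
    (hroot : ∀ (c : C) (i : ℕ) (us : Fin (uar (some (c, i))) → ATerm C) (b : ATerm C),
      Term.app f ts = appT (.app (some (c, i)) us) b → ¬ i < aa c) :
    UFree aa (Term.app f ts) := by
  intro c i us b hsub hi
  rcases subterm_app (hsub : Subterm (Term.app none _) _) with h | ⟨j, hj⟩
  · exact hroot c i us b h.symm hi
  · exact hargs j c i us b hj hi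

theorem ufree_appT {a b : ATerm C} (ha : UFree aa a) (hb : UFree aa b)
    (hroot : ∀ (c : C) (i : ℕ) (us : Fin (uar (some (c, i))) → ATerm C),
      a = .app (some (c, i)) us → ¬ i < aa c) :
    UFree aa (appT a b) := by
  show UFree aa (Term.app none _)
  refine ufree_app ?_ ?_
  · intro i
    rcases fin2_elim i with h | h <;> subst h <;> simpa using (by assumption : UFree aa _)
  · intro c i us v heq
    have h2 : appT a b = appT (Term.app (some (c, i)) us) v := heq
    obtain ⟨h3, _⟩ := appT_inj h2
    exact hroot c i us h3

theorem ufree_down (t : ATerm C) : UFree aa (down aa t) := by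
  induction t with
  | var x => exact ufree_var x
  | app f ts ih =>
      obtain _ | p := f
      · rw [down_app_none]
        set A := down aa (ts ⟨0, by simp [uar]⟩) with hA
        set B := down aa (ts ⟨1, by simp [uar]⟩) with hB
        have ihA : UFree aa A := ih _
        have ihB : UFree aa B := ih _
        rcases hAs : A with y | ⟨g | ⟨c, i⟩, us⟩
        · exact ufree_appT (ufree_var y) ihB (by intro c i us h; cases h)
        · refine ufree_appT (hAs ▸ ihA) ihB ?_
          intro c i us h; cases h
        · rw [applyU_some]
          split
          · rename_i hlt
            refine ufree_app ?_ ?_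
            · intro j
              by_cases hj : (j : ℕ) < i
              · rw [dif_pos hj]
                refine ufree_subterm (hAs ▸ ihA) ?_
                exact Subterm.app _ us ⟨j, hj⟩ _ (Subterm.refl _)
              · rw [dif_neg hj]; exact ihB
            · intro c' i' us' b h; cases h
          · rename_i hge
            refine ufree_appT (hAs ▸ ihA) ihB ?_
            intro c' i' us' h
            injection h with h1 h2
            injection h1 with h1
            injection h1 with hc hi2
            subst hc
            subst hi2
            exact hge
      · rw [down_app_some]
        refine ufree_app (fun i => ih i) ?_
        intro c i us b h; cases h

theorem normto_down (t : ATerm C) : NormTo (USys aa) t (down aa t) :=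
  ⟨rstar_down t, ufree_nf (ufree_down t)⟩

theorem down_update {f : USig C} {ts : Fin (uar f) → ATerm C} {i : Fin (uar f)}
    {u : ATerm C} (h : down aa u = down aa (ts i)) :
    down aa (Term.app f (Function.update ts i u)) = down aa (Term.app f ts) := by
  have key : ∀ j, down aa (Function.update ts i u j) = down aa (ts j) := by
    intro j
    by_cases hj : j = i
    · subst hj; rw [Function.update_self, h]
    · rw [Function.update_of_ne hj]
  obtain _ | p := f
  · rw [down_app_none, down_app_none, key, key]
  · rw [down_app_some, down_app_some]
    congr 1
    funext j
    exact key j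

theorem down_ustep {s t : ATerm C} (h : Rew (USys aa) s t) : down aa s = down aa t := by
  induction h with
  | rule l r σ hm =>
      obtain ⟨c, i, hi, hp⟩ := hm
      have hl : l = appT (fiT c i) (.var i) := congrArg Prod.fst hp
      have hr : r = fiT c (i + 1) := congrArg Prod.snd hp
      subst hl hr
      rw [subst_appT, subst_fiT]
      rw [down_appT, down_app_some]
      have hvar : ((Term.var i : ATerm C).subst σ) = σ i := rfl
      rw [hvar]
      rw [applyU_some, dif_pos hi]
      have hr2 : ((fiT c (i + 1)).subst σ) = Term.app (some (c, i + 1)) (fun j => σ j.1) :=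
        subst_fiT c (i + 1) σ
      rw [hr2, down_app_some]
      congr 1
      funext j
      by_cases hj : (j : ℕ) < i
      · rw [dif_pos hj]
      · rw [dif_neg hj]
        have : (j : ℕ) = i := by
          have h2 : (j : ℕ) < i + 1 := j.isLt
          omega
        rw [this]
  | congr f ts i u h ih => exact (down_update ih.symm).symm

theorem down_ustar {s t : ATerm C} (h : RStar (USys aa) s t) : down aa s = down aa t := by
  induction h with
  | refl => rfl
  | tail h2 h3 ih => exact ih.trans (down_ustep h3)

end DownNF
section EtaInv

variable {C : Type} {aa : C → ℕ}

theorem headCount_appT (a b : ATerm C) :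
    headCount (appT a b) = (headCount a).map (fun p => (p.1, p.2 + 1)) := by
  show headCount (Term.app none _) = _
  rw [headCount]
  simp

theorem headCount_c0 (c : C) (ts : Fin (uar (some (c, 0))) → ATerm C) :
    headCount (Term.app (some (c, 0)) ts) = some (c, 0) := by
  rw [headCount]

theorem headCount_exists {t : ATerm C} (happ : ApplicativeT t) (hvf : HeadVarFree t)
    (hnv : ∀ x, t ≠ .var x) : ∃ c n, headCount t = some (c, n) := by
  induction t with
  | var x => exact absurd rfl (hnv x)
  | app f ts ih =>
      obtain _ | ⟨c, i⟩ := f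
      · obtain ⟨c, n, hc⟩ := ih ⟨0, by simp [uar]⟩ (applicativeT_arg happ _) (hvf_arg hvf _)
          (hvf_head_ne_var hvf)
        refine ⟨c, n + 1, ?_⟩
        rw [app_none_eq_appT ts, headCount_appT, hc]
        rfl
      · have h0 : i = 0 := happ _ _ ts (Subterm.refl _) rfl
        subst h0
        exact ⟨c, 0, headCount_c0 c ts⟩

theorem appT_ne_var (a b : ATerm C) (x : ℕ) : appT a b ≠ .var x := by
  simp [appT]

theorem eta_inv {R : Set (ATerm C × ATerm C)} (hR : IsATRS R) (hl : LHVF R)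
    (haa : AASpec R aa) :
    ∀ p : ATerm C × ATerm C, Eta aa R p →
      (∀ x, p.1 ≠ .var x) ∧ HeadVarFree p.1 ∧ ApplicativeT p.1 ∧ ApplicativeT p.2 ∧
        ∃ c n, headCount p.1 = some (c, n) ∧ n ≤ aa c := by
  intro p h
  induction h with
  | base p hp =>
      obtain ⟨hnv, hvars, ha1, ha2⟩ := hR p hp
      have hvf := hl p hp
      obtain ⟨c, n, hc⟩ := headCount_exists ha1 hvf hnv
      refine ⟨hnv, hvf, ha1, ha2, c, n, hc, ?_⟩
      exact (haa c).1 n ⟨p, hp, p.1, Or.inl (Subterm.refl _), hc⟩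
  | eta l r c n x h hc hn hx1 hx2 ih =>
      obtain ⟨hnv, hvf, ha1, ha2, c', n', hc', hb⟩ := ih
      refine ⟨fun y => appT_ne_var l (.var x) y, ?_,
        applicative_appT ha1 (applicative_var x),
        applicative_appT ha2 (applicative_var x), c, n + 1, ?_, hn⟩
      · intro u hu y v
        rcases subterm_app (hu : Subterm u (Term.app none _)) with he | ⟨i, hi⟩
        · intro hc2
          rw [hc2] at he
          obtain ⟨h3, _⟩ := appT_inj he.symm
          exact hnv y h3
        · rcases fin2_elim i with hh | hh <;> subst hh
          · exact hvf u (by simpa using hi) y v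
          · have : u = Term.var x := subterm_var (by simpa using hi)
            subst this
            exact appT_ne_var _ _ x ∘ Eq.symm
      · rw [headCount_appT, hc]
        rfl

def maxVar : ATerm C → ℕ
  | .var x => x + 1
  | .app _ ts => (List.ofFn (fun i => maxVar (ts i))).foldr max 0

theorem le_foldr_max {a : ℕ} {L : List ℕ} (h : a ∈ L) : a ≤ L.foldr max 0 := by
  induction L with
  | nil => cases h
  | cons b L ih =>
      rcases List.mem_cons.mp h with rfl | h'
      · exact le_max_left _ _
      · exact le_trans (ih h') (le_max_right _ _)

theorem lt_maxVar {u t : ATerm C} (h : Subterm u t) : ∀ x, u = .var x → x < maxVar t := by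
  induction h with
  | refl t =>
      intro x hx
      subst hx
      simp [maxVar]
  | app f ts i u h ih =>
      intro x hx
      have h1 := ih x hx
      have h2 : maxVar (ts i) ≤ maxVar (Term.app f ts) := by
        show maxVar (ts i) ≤ (List.ofFn (fun i => maxVar (ts i))).foldr max 0
        exact le_foldr_max (by rw [List.mem_ofFn]; exact ⟨i, rfl⟩)
      omega

theorem exists_fresh (l r : ATerm C) :
    ∃ x : ℕ, ¬ Subterm (.var x) l ∧ ¬ Subterm (.var x) r := by
  refine ⟨max (maxVar l) (maxVar r), fun h => ?_, fun h => ?_⟩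
  · have := lt_maxVar h _ rfl; omega
  · have := lt_maxVar h _ rfl; omega

end EtaInv
section RelClosure

variable {C : Type} {aa : C → ℕ}

/-- Iterated application. -/
def apps (t : ATerm C) (ws : List (ATerm C)) : ATerm C := ws.foldl appT t

theorem apps_cons (t w : ATerm C) (ws : List (ATerm C)) :
    apps t (w :: ws) = apps (appT t w) ws := rfl

theorem down_apps (a : ATerm C) (ws : List (ATerm C)) :
    down aa (apps a ws) = (ws.map (down aa)).foldl (applyU aa) (down aa a) := by
  induction ws generalizing a with
  | nil => rfl
  | cons w ws ih =>
      rw [apps_cons, ih, down_appT]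
      rfl

theorem down_spine :
    ∀ (t : ATerm C), ApplicativeT t → HeadVarFree t → ∀ (c : C) (n : ℕ),
      headCount t = some (c, n) → n ≤ aa c →
      ∃ us, down aa t = Term.app (some (c, n)) us := by
  intro t
  induction t with
  | var x => intro _ _ c n hc; rw [headCount] at hc; cases hc
  | app f ts ih =>
      intro ha hv c n hc hb
      obtain _ | ⟨c', i⟩ := f
      · rw [app_none_eq_appT ts, headCount_appT] at hc
        obtain ⟨⟨c0, n0⟩, h1, h2⟩ := Option.map_eq_some_iff.mp hc
        have h2c : c0 = c := congrArg Prod.fst h2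
        have h2n : n0 + 1 = n := congrArg Prod.snd h2
        subst h2c
        subst h2n
        obtain ⟨us0, hd⟩ := ih ⟨0, by simp [uar]⟩ (applicativeT_arg ha _) (hvf_arg hv _)
          c0 n0 h1 (by omega)
        rw [down_app_none, hd, applyU_some, dif_pos (show n0 < aa c0 by omega)]
        exact ⟨_, rfl⟩
      · have h0 : i = 0 := ha _ _ ts (Subterm.refl _) rfl
        subst h0
        rw [headCount_c0] at hc
        injection hc with hc
        injection hc with hcc hcn
        subst hcc
        subst hcn
        rw [down_app_some]
        exact ⟨_, rfl⟩

theorem relstep_congr {E U : Set (ATerm C × ATerm C)} {f : USig C}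
    {ts : Fin (uar f) → ATerm C} {i : Fin (uar f)} {b : ATerm C}
    (h : RelStep E U (ts i) b) :
    RelStep E U (Term.app f ts) (Term.app f (Function.update ts i b)) := by
  obtain ⟨p, q, h1, h2, h3⟩ := h
  refine ⟨Term.app f (Function.update ts i p), Term.app f (Function.update ts i q),
    rstar_congr h1, ?_, ?_⟩
  · have := Rew.congr f (Function.update ts i p) i q (by rwa [Function.update_self])
    rwa [Function.update_idem] at this
  · have := rstar_congr (X := U) (ts := Function.update ts i q) (i := i)
      (by rwa [Function.update_self] : RStar U (Function.update ts i q i) b)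
    rwa [Function.update_idem] at this

theorem appT_update_left (X Y v : ATerm C) :
    appT Y v = Term.app (none : USig C)
      (Function.update (fun k : Fin (uar (none : USig C)) => if (k : ℕ) = 0 then X else v)
        ⟨0, by simp [uar]⟩ Y) := by
  unfold appT
  congr 1
  funext k
  rcases fin2_elim k with h | h <;> subst h
  · rw [Function.update_self]; rfl
  · rw [Function.update_of_ne (by intro hc; exact absurd (Fin.ext_iff.mp hc) (by simp))]
    simp

theorem appT_update_right (X v v' : ATerm C) :
    appT X v' = Term.app (none : USig C)
      (Function.update (fun k : Fin (uar (none : USig C)) => if (k : ℕ) = 0 then X else v)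
        ⟨1, by simp [uar]⟩ v') := by
  unfold appT
  congr 1
  funext k
  rcases fin2_elim k with h | h <;> subst h
  · rw [Function.update_of_ne (by intro hc; exact absurd (Fin.ext_iff.mp hc) (by simp))]
    simp
  · rw [Function.update_self]; rfl

theorem relstep_foldl {E U : Set (ATerm C × ATerm C)} :
    ∀ (V : List (ATerm C)) (f : USig C) (ts : Fin (uar f) → ATerm C) (i : Fin (uar f))
      (b : ATerm C), RelStep E U (ts i) b →
      RelStep E U (V.foldl (applyU aa) (.app f ts))
        (V.foldl (applyU aa) (.app f (Function.update ts i b))) := by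
  intro V
  induction V with
  | nil => intro f ts i b h; exact relstep_congr h
  | cons v V ih =>
      intro f ts i b h
      show RelStep E U (V.foldl (applyU aa) (applyU aa (.app f ts) v))
        (V.foldl (applyU aa) (applyU aa (.app f (Function.update ts i b)) v))
      obtain _ | ⟨c, j⟩ := f
      · rw [applyU_none, applyU_none]
        rw [show appT (Term.app none ts) v = Term.app (none : USig C)
          (fun k : Fin (uar (none : USig C)) => if (k : ℕ) = 0 then Term.app none ts else v)
          from rfl]
        rw [appT_update_left (Term.app none ts) (Term.app none (Function.update ts i b)) v]
        exact ih none _ ⟨0, by simp [uar]⟩ _ (relstep_congr h)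
      · rw [applyU_some, applyU_some]
        by_cases hj : j < aa c
        · rw [dif_pos hj, dif_pos hj]
          have hij : (i : ℕ) < j := i.isLt
          have hi2 : (i : ℕ) < j + 1 := by omega
          have harg : (fun k : Fin (uar (some (c, j + 1))) =>
              if hk : (k : ℕ) < j then Function.update ts i b ⟨k, hk⟩ else v)
              = Function.update (fun k : Fin (uar (some (c, j + 1))) =>
                  if hk : (k : ℕ) < j then ts ⟨k, hk⟩ else v) ⟨i.1, hi2⟩ b := by
            funext k
            by_cases hk : k = (⟨i.1, hi2⟩ : Fin (uar (some (c, j + 1))))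
            · subst hk
              rw [Function.update_self, dif_pos (show ((⟨i.1, hi2⟩ : Fin (uar (some (c, j + 1)))) : ℕ) < j from hij)]
              rw [show (⟨(⟨i.1, hi2⟩ : Fin (uar (some (c, j + 1)))).1, _⟩ : Fin (uar (some (c, j)))) = i from Fin.ext rfl]
              rw [Function.update_self]
            · rw [Function.update_of_ne hk]
              by_cases hlt : (k : ℕ) < j
              · rw [dif_pos hlt, dif_pos hlt]
                rw [Function.update_of_ne]
                intro hc2
                exact hk (Fin.ext (by simpa using Fin.ext_iff.mp hc2))
              · rw [dif_neg hlt, dif_neg hlt]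
          rw [harg]
          refine ih (some (c, j + 1)) _ ⟨i.1, hi2⟩ b ?_
          show RelStep E U (if hk : (i : ℕ) < j then ts ⟨i.1, hk⟩ else v) b
          rw [dif_pos hij]
          rw [show (⟨i.1, hij⟩ : Fin (uar (some (c, j)))) = i from Fin.ext rfl]
          exact h
        · rw [dif_neg hj, dif_neg hj]
          rw [show appT (Term.app (some (c, j)) ts) v = Term.app (none : USig C)
            (fun k : Fin (uar (none : USig C)) =>
              if (k : ℕ) = 0 then Term.app (some (c, j)) ts else v) from rfl]
          rw [appT_update_left (Term.app (some (c, j)) ts)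
            (Term.app (some (c, j)) (Function.update ts i b)) v]
          exact ih none _ ⟨0, by simp [uar]⟩ _ (relstep_congr h)

theorem relstep_applyU_right {E U : Set (ATerm C × ATerm C)} (V : List (ATerm C))
    {A b b' : ATerm C} (h : RelStep E U b b') :
    RelStep E U (V.foldl (applyU aa) (applyU aa A b)) (V.foldl (applyU aa) (applyU aa A b')) := by
  rcases A with y | ⟨g | ⟨c, i⟩, ts⟩
  · rw [applyU_var, applyU_var,
      show appT (Term.var y) b = Term.app (none : USig C)
        (fun k : Fin (uar (none : USig C)) => if (k : ℕ) = 0 then Term.var y else b) from rfl,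
      appT_update_right (Term.var y) b b']
    exact relstep_foldl V none _ ⟨1, by simp [uar]⟩ _ (by simpa using h)
  · rw [applyU_none, applyU_none,
      show appT (Term.app none ts) b = Term.app (none : USig C)
        (fun k : Fin (uar (none : USig C)) => if (k : ℕ) = 0 then Term.app none ts else b) from rfl,
      appT_update_right (Term.app none ts) b b']
    exact relstep_foldl V none _ ⟨1, by simp [uar]⟩ _ (by simpa using h)
  · rw [applyU_some, applyU_some]
    by_cases hi : i < aa c
    · rw [dif_pos hi, dif_pos hi]
      have hlast : (i : ℕ) < i + 1 := by omega
      have harg : (fun k : Fin (uar (some (c, i + 1))) =>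
          if hk : (k : ℕ) < i then ts ⟨k, hk⟩ else b')
          = Function.update (fun k : Fin (uar (some (c, i + 1))) =>
              if hk : (k : ℕ) < i then ts ⟨k, hk⟩ else b) ⟨i, hlast⟩ b' := by
        funext k
        by_cases hk : k = (⟨i, hlast⟩ : Fin (uar (some (c, i + 1))))
        · subst hk
          rw [Function.update_self, dif_neg (lt_irrefl i)]
        · rw [Function.update_of_ne hk]
          have hkk : (k : ℕ) < i := by
            have h1 : (k : ℕ) < i + 1 := k.isLt
            have h2 : (k : ℕ) ≠ i := fun hc2 => hk (Fin.ext hc2)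
            omega
          rw [dif_pos hkk, dif_pos hkk]
      rw [harg]
      refine relstep_foldl V (some (c, i + 1)) _ ⟨i, hlast⟩ b' ?_
      show RelStep E U (if hk : (i : ℕ) < i then ts ⟨i, hk⟩ else b) b'
      rw [dif_neg (lt_irrefl i)]
      exact h
    · rw [dif_neg hi, dif_neg hi,
        show appT (Term.app (some (c, i)) ts) b = Term.app (none : USig C)
          (fun k : Fin (uar (none : USig C)) =>
            if (k : ℕ) = 0 then Term.app (some (c, i)) ts else b) from rfl,
        appT_update_right (Term.app (some (c, i)) ts) b b']
      exact relstep_foldl V none _ ⟨1, by simp [uar]⟩ _ (by simpa using h)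

theorem rstar_apps_pointwise {X : Set (ATerm C × ATerm C)} {z z' : ATerm C}
    (h : RStar X z z') :
    ∀ {V V' : List (ATerm C)}, List.Forall₂ (RStar X) V V' →
      RStar X (apps z V) (apps z' V') := by
  intro V V' hV
  induction hV generalizing z z' with
  | nil => exact h
  | cons hv hV ih => exact ih (rstar_appT h hv)

theorem rew_apps_left {X : Set (ATerm C × ATerm C)} {z z' : ATerm C} (V : List (ATerm C))
    (h : Rew X z z') : Rew X (apps z V) (apps z' V) :=
  rew_foldl_left V h

theorem rstar_apps_left {X : Set (ATerm C × ATerm C)} {z z' : ATerm C} (V : List (ATerm C))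
    (h : RStar X z z') : RStar X (apps z V) (apps z' V) :=
  rstar_foldl_left V h

theorem rstar_subst_pointwise {X : Set (ATerm C × ATerm C)} {σ τ : ℕ → ATerm C}
    (h : ∀ x, RStar X (σ x) (τ x)) (t : ATerm C) : RStar X (t.subst σ) (t.subst τ) := by
  induction t with
  | var x => exact h x
  | app f ts ih =>
      show RStar X (Term.app f fun i => (ts i).subst σ) (Term.app f fun i => (ts i).subst τ)
      exact rstar_congr_all _ _ ih

end RelClosure
section Sim

variable {C : Type} {aa : C → ℕ}

theorem rc_core {R : Set (ATerm C × ATerm C)} {l r : ATerm C}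
    (hEta : Eta aa R (l, r)) (hvf : HeadVarFree l) (σ : ℕ → ATerm C) :
    ∃ b, Rew (EtaDown aa R) (down aa (l.subst σ)) b ∧
      RStar (USys aa) b (down aa (r.subst σ)) := by
  refine ⟨(down aa r).subst (fun x => down aa (σ x)), ?_, ?_⟩
  · have hrule : (down aa l, down aa r) ∈ EtaDown aa R :=
      ⟨l, r, hEta, normto_down l, normto_down r⟩
    have h := Rew.rule (down aa l) (down aa r) (fun x => down aa (σ x)) hrule
    rwa [← down_subst hvf] at h
  · have h1 : RStar (USys aa) (r.subst σ) ((down aa r).subst (fun x => down aa (σ x))) :=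
      ((rstar_down r).substc σ).trans
        (rstar_subst_pointwise (fun x => rstar_down (σ x)) (down aa r))
    have h2 : down aa ((down aa r).subst (fun x => down aa (σ x)))
        = down aa (r.subst σ) := (down_ustar h1).symm
    rw [← h2]
    exact rstar_down _

theorem foldl_applyU_appT :
    ∀ (V : List (ATerm C)) (x y : ATerm C),
      V.foldl (applyU aa) (appT x y) = apps (appT x y) V := by
  intro V
  induction V with
  | nil => exact fun x y => rfl
  | cons v V ih =>
      intro x y
      show V.foldl (applyU aa) (applyU aa (appT x y) v) = _
      rw [show applyU aa (appT x y) v = appT (appT x y) v from rfl, ih, apps_cons]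

theorem forall2_down (L : List (ATerm C)) :
    List.Forall₂ (RStar (USys aa)) L (L.map (down aa)) := by
  induction L with
  | nil => exact .nil
  | cons a L ih => exact .cons (rstar_down a) ih

theorem forall2_refl_rstar (L : List (ATerm C)) {X : Set (ATerm C × ATerm C)} :
    List.Forall₂ (RStar X) L L :=
  List.forall₂_same.mpr (fun v _ => .refl)

theorem rc {R : Set (ATerm C × ATerm C)} (hR : IsATRS R) (hl : LHVF R) (haa : AASpec R aa) :
    ∀ (ws : List (ATerm C)) (l r : ATerm C) (σ : ℕ → ATerm C), Eta aa R (l, r) →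
      RelStep (EtaDown aa R) (USys aa) (down aa (apps (l.subst σ) ws))
        (down aa (apps (r.subst σ) ws)) := by
  intro ws
  induction ws with
  | nil =>
      intro l r σ hEta
      obtain ⟨hnv, hvf, _⟩ := eta_inv hR hl haa _ hEta
      obtain ⟨b, h1, h2⟩ := rc_core hEta hvf σ
      exact ⟨_, b, .refl, h1, h2⟩
  | cons w ws ih =>
      intro l r σ hEta
      obtain ⟨hnv, hvf, ha1, ha2, c, n, hc, hb⟩ := eta_inv hR hl haa _ hEta
      by_cases hn : n < aa c
      · obtain ⟨x, hx1, hx2⟩ := exists_fresh l r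
        have hEta' : Eta aa R (appT l (.var x), appT r (.var x)) :=
          Eta.eta l r c n x hEta hc hn hx1 hx2
        have el : (appT l (.var x)).subst (fun y => if y = x then w else σ y)
            = appT (l.subst σ) w := by
          rw [subst_appT]
          congr 1
          · exact (subst_congr_of fun y hy => by
              rw [if_neg (fun hyx => hx1 (by rw [← hyx]; exact hy))]).symm
          · show (if x = x then w else σ x) = w
            rw [if_pos rfl]
        have er : (appT r (.var x)).subst (fun y => if y = x then w else σ y)
            = appT (r.subst σ) w := by
          rw [subst_appT]
          congr 1
          · exact (subst_congr_of fun y hy => by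
              rw [if_neg (fun hyx => hx2 (by rw [← hyx]; exact hy))]).symm
          · show (if x = x then w else σ x) = w
            rw [if_pos rfl]
        rw [apps_cons, apps_cons, ← el, ← er]
        exact ih _ _ _ hEta'
      · obtain ⟨us, hdl⟩ := down_spine l ha1 hvf c n hc hb
        have hdlσ : down aa (l.subst σ)
            = Term.app (some (c, n)) (fun j => (us j).subst (fun x => down aa (σ x))) := by
          rw [down_subst hvf, hdl]
          rfl
        obtain ⟨b, h1, h2⟩ := rc_core hEta hvf σ
        have hsat : ∀ v, applyU aa (down aa (l.subst σ)) v = appT (down aa (l.subst σ)) v := by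
          intro v
          rw [hdlσ, applyU_some, dif_neg hn]
        set V : List (ATerm C) := down aa w :: ws.map (down aa) with hV
        have hL : down aa (apps (l.subst σ) (w :: ws)) = apps (down aa (l.subst σ)) V := by
          rw [down_apps]
          show (ws.map (down aa)).foldl (applyU aa)
            (applyU aa (down aa (l.subst σ)) (down aa w)) = _
          rw [hsat (down aa w), foldl_applyU_appT, apps_cons]
        have hback : down aa (apps (r.subst σ) (w :: ws))
            = down aa (apps (down aa (r.subst σ)) V) := by
          refine down_ustar ?_
          exact rstar_apps_pointwise (rstar_down _)
            (List.Forall₂.cons (rstar_down w) (forall2_down ws))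
        refine ⟨apps (down aa (l.subst σ)) V, apps b V,
          by rw [hL]; exact Relation.ReflTransGen.refl, rew_apps_left V h1, ?_⟩
        have hs1 : RStar (USys aa) (apps b V) (apps (down aa (r.subst σ)) V) :=
          rstar_apps_pointwise h2 (forall2_refl_rstar V)
        have hs2 := rstar_down (t := apps (down aa (r.subst σ)) V) (aa := aa)
        rw [← hback] at hs2
        exact hs1.trans hs2

theorem sim_step {R : Set (ATerm C × ATerm C)} (hR : IsATRS R) (hl : LHVF R)
    (haa : AASpec R aa) {s u : ATerm C} (h : Rew R s u) :
    ∀ ws : List (ATerm C),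
      RelStep (EtaDown aa R) (USys aa) (down aa (apps s ws)) (down aa (apps u ws)) := by
  induction h with
  | rule l r σ hm => exact fun ws => rc hR hl haa ws l r σ (Eta.base _ hm)
  | congr f ts i u h ih =>
      intro ws
      obtain _ | ⟨c, j⟩ := f
      · rcases fin2_elim i with hi | hi <;> subst hi
        · have e1 : apps (Term.app none ts) ws
              = apps (ts ⟨0, by simp [uar]⟩) (ts ⟨1, by simp [uar]⟩ :: ws) := by
            rw [apps_cons, app_none_eq_appT ts]
          have e2 : apps (Term.app none (Function.update ts ⟨0, by simp [uar]⟩ u)) ws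
              = apps u (ts ⟨1, by simp [uar]⟩ :: ws) := by
            rw [apps_cons, app_none_eq_appT (Function.update ts ⟨0, by simp [uar]⟩ u)]
            rw [Function.update_self,
              Function.update_of_ne (by intro hc2; simp [Fin.ext_iff] at hc2)]
          rw [e1, e2]
          exact ih _
        · rw [down_apps, down_apps]
          rw [show Term.app (none : USig C) ts
            = appT (ts ⟨0, by simp [uar]⟩) (ts ⟨1, by simp [uar]⟩) from app_none_eq_appT ts]
          rw [show Term.app (none : USig C) (Function.update ts ⟨1, by simp [uar]⟩ u)
            = appT (ts ⟨0, by simp [uar]⟩) u from by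
              rw [app_none_eq_appT (Function.update ts ⟨1, by simp [uar]⟩ u),
                Function.update_self,
                Function.update_of_ne (by intro hc2; simp [Fin.ext_iff] at hc2)]]
          rw [down_appT, down_appT]
          exact relstep_applyU_right _ (ih [])
      · rw [down_apps, down_apps, down_app_some, down_app_some]
        rw [show (fun j2 => down aa (Function.update ts i u j2))
            = Function.update (fun j2 => down aa (ts j2)) i (down aa u) from
          update_comp (down aa) ts i u]
        exact relstep_foldl _ (some (c, j)) _ i _ (ih [])

theorem sim_pow {R : Set (ATerm C × ATerm C)} (hR : IsATRS R) (hl : LHVF R)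
    (haa : AASpec R aa) :
    ∀ (m : ℕ) {s u : ATerm C}, RelPow (Rew R) m s u →
      RelPow (RelStep (EtaDown aa R) (USys aa)) m (down aa s) (down aa u) := by
  intro m
  induction m with
  | zero => exact fun h => congrArg (down aa) h
  | succ m ih =>
      rintro s u ⟨b, hb, hrest⟩
      exact ⟨down aa b, sim_step hR hl haa hb [], ih hrest⟩

end Sim
section Good

variable {C : Type} {aa : C → ℕ}

theorem goodterm_arg {f : USig C} {ts : Fin (uar f) → ATerm C}
    (h : GoodTerm aa (Term.app f ts)) (i : Fin (uar f)) : GoodTerm aa (ts i) :=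
  fun u g us hu he => h u g us (Subterm.app f ts i u hu) he

theorem forall2_ofFn {k : ℕ} (f g : Fin k → ATerm C) {X : Set (ATerm C × ATerm C)}
    (h : ∀ j, RStar X (f j) (g j)) :
    List.Forall₂ (RStar X) (List.ofFn f) (List.ofFn g) := by
  induction k with
  | zero => rw [List.ofFn_zero, List.ofFn_zero]; exact .nil
  | succ k ih =>
      rw [List.ofFn_succ, List.ofFn_succ]
      exact .cons (h 0) (ih _ _ (fun j => h j.succ))

theorem rstar_fold_up : ∀ (i : ℕ) (c : C), i ≤ aa c → ∀ ts : Fin i → ATerm C,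
    RStar (USys aa) ((List.ofFn ts).foldl appT (constT c))
      (Term.app (some (c, i)) (fun j : Fin (uar (some (c, i))) => ts ⟨j.1, j.isLt⟩)) := by
  intro i
  induction i with
  | zero =>
      intro c _ ts
      rw [show (List.ofFn ts) = [] from by simp]
      rw [show Term.app (some (c, 0))
        (fun j : Fin (uar (some (c, 0))) => ts ⟨j.1, j.isLt⟩) = constT c from constT_eq _]
      exact .refl
  | succ i ih =>
      intro c hi ts
      rw [List.ofFn_succ', List.concat_eq_append, List.foldl_append, List.foldl_cons,
        List.foldl_nil]
      have h1 := ih c (by omega) (fun j => ts j.castSucc)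
      refine Relation.ReflTransGen.trans (rstar_appT_left _ h1) ?_
      refine Relation.ReflTransGen.trans (rstar_appT_applyU _ _) ?_
      have harg : (fun k : Fin (uar (some (c, i + 1))) =>
          if hk : (k : ℕ) < i then
            (fun j : Fin (uar (some (c, i))) =>
              (fun j : Fin i => ts j.castSucc) ⟨j.1, j.isLt⟩) ⟨k.1, hk⟩
          else ts (Fin.last i))
          = (fun j : Fin (uar (some (c, i + 1))) => ts ⟨j.1, j.isLt⟩) := by
        funext k
        by_cases hk : (k : ℕ) < i
        · rw [dif_pos hk]
          exact congrArg ts (Fin.ext rfl)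
        · rw [dif_neg hk]
          refine congrArg ts (Fin.ext ?_)
          have h2 : (k : ℕ) < i + 1 := k.isLt
          show (i : ℕ) = (k : ℕ)
          omega
      rw [applyU_some, dif_pos (show i < aa c by omega), harg]

theorem curry_to_self {t : ATerm C} (h : GoodTerm aa t) : RStar (USys aa) (curryId t) t := by
  induction t with
  | var x => exact .refl
  | app f ts ih =>
      obtain _ | ⟨c, i⟩ := f
      · rw [curryId_app_none]
        refine Relation.ReflTransGen.trans
          (rstar_appT (ih _ (goodterm_arg h _)) (ih _ (goodterm_arg h _))) ?_
        rw [← app_none_eq_appT ts]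
      · rw [curryId_app_some]
        have hgood : GoodSym aa (some (c, i)) := h _ _ ts (Subterm.refl _) rfl
        have hle : i ≤ aa c := hgood
        have h1 : RStar (USys aa)
            ((List.ofFn fun j : Fin (uar (some (c, i))) => curryId (ts j)).foldl appT (constT c))
            ((List.ofFn fun j : Fin (uar (some (c, i))) => ts j).foldl appT (constT c)) :=
          rstar_apps_pointwise (z := constT c) (z' := constT c) .refl
            (forall2_ofFn _ _ (fun j => ih j (goodterm_arg h j)))
        refine h1.trans ?_
        have key := rstar_fold_up i c hle (fun j : Fin i => ts ⟨j.1, j.isLt⟩)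
        have e1 : (List.ofFn fun j : Fin i =>
            ts ⟨j.1, j.isLt⟩) = (List.ofFn fun j : Fin (uar (some (c, i))) => ts j) := rfl
        have e2 : (Term.app (some (c, i)) (fun j : Fin (uar (some (c, i))) =>
            (fun j : Fin i => ts ⟨j.1, j.isLt⟩) ⟨j.1, j.isLt⟩)) = Term.app (some (c, i)) ts := rfl
        rw [e1, e2] at key
        exact key

theorem dh_eq_curry {R : Set (ATerm C × ATerm C)} (hR : IsATRS R) (hl : LHVF R)
    (haa : AASpec R aa) {t : ATerm C} (hg : GoodTerm aa t) :
    dh (RelStep (EtaDown aa R) (USys aa)) t = dh (Rew R) (curryId t) := by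
  unfold dh
  congr 1
  ext m
  constructor
  · rintro ⟨u, hu⟩
    exact ⟨curryId u, proj_relpow hR m hu⟩
  · rintro ⟨u, hu⟩
    have h1 : down aa (curryId t) = down aa t := down_ustar (curry_to_self hg)
    have h2 := sim_pow hR hl haa m hu
    rw [h1] at h2
    cases m with
    | zero => exact ⟨t, rfl⟩
    | succ m =>
        obtain ⟨b, hb, hrest⟩ :=
          (h2 : ∃ b, RelStep (EtaDown aa R) (USys aa) (down aa t) b ∧
            RelPow (RelStep (EtaDown aa R) (USys aa)) m b (down aa u))
        obtain ⟨p, q, hp, hpq, hq⟩ := hb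
        refine ⟨down aa u, ?_⟩
        show ∃ c, RelStep (EtaDown aa R) (USys aa) t c ∧
          RelPow (RelStep (EtaDown aa R) (USys aa)) m c (down aa u)
        exact ⟨b, ⟨p, q, (rstar_down t).trans hp, hpq, hq⟩, hrest⟩

end Good
section Bound

variable {C : Type}

attribute [local instance] Classical.propDecidable

/-- Occurrence list of symbols (variables and constants). -/
def vlist : ATerm C → List (ℕ ⊕ C)
  | .var x => [.inl x]
  | .app none ts => vlist (ts ⟨0, by simp [uar]⟩) ++ vlist (ts ⟨1, by simp [uar]⟩)
  | .app (some (c, _)) ts => .inr c :: (List.ofFn (fun j => vlist (ts j))).flatten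

theorem mem_vlist_var {u t : ATerm C} (h : Subterm u t) :
    ∀ x : ℕ, u = .var x → Sum.inl x ∈ vlist t := by
  induction h with
  | refl t =>
      intro x hx
      subst hx
      simp [vlist]
  | app f ts i u h ih =>
      intro x hx
      have hm := ih x hx
      obtain _ | ⟨c, k⟩ := f
      · rw [show vlist (Term.app none ts)
          = vlist (ts ⟨0, by simp [uar]⟩) ++ vlist (ts ⟨1, by simp [uar]⟩) from by rw [vlist]]
        rcases fin2_elim i with hi | hi <;> subst hi
        · exact List.mem_append_left _ hm
        · exact List.mem_append_right _ hm
      · rw [show vlist (Term.app (some (c, k)) ts)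
          = .inr c :: (List.ofFn (fun j => vlist (ts j))).flatten from by rw [vlist]]
        refine List.mem_cons_of_mem _ (List.mem_flatten.mpr ⟨vlist (ts i), ?_, hm⟩)
        rw [List.mem_ofFn]
        exact ⟨i, rfl⟩

theorem mem_vlist_const {u t : ATerm C} (h : Subterm u t) :
    ∀ (c : C) (k : ℕ) (us : Fin (uar (some (c, k))) → ATerm C),
      u = .app (some (c, k)) us → Sum.inr c ∈ vlist t := by
  induction h with
  | refl t =>
      intro c k us hx
      subst hx
      rw [show vlist (Term.app (some (c, k)) us)
        = .inr c :: (List.ofFn (fun j => vlist (us j))).flatten from by rw [vlist]]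
      exact List.mem_cons_self
  | app f ts i u h ih =>
      intro c k us hx
      have hm := ih c k us hx
      obtain _ | ⟨c', k'⟩ := f
      · rw [show vlist (Term.app none ts)
          = vlist (ts ⟨0, by simp [uar]⟩) ++ vlist (ts ⟨1, by simp [uar]⟩) from by rw [vlist]]
        rcases fin2_elim i with hi | hi <;> subst hi
        · exact List.mem_append_left _ hm
        · exact List.mem_append_right _ hm
      · rw [show vlist (Term.app (some (c', k')) ts)
          = .inr c' :: (List.ofFn (fun j => vlist (ts j))).flatten from by rw [vlist]]
        refine List.mem_cons_of_mem _ (List.mem_flatten.mpr ⟨vlist (ts i), ?_, hm⟩)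
        rw [List.mem_ofFn]
        exact ⟨i, rfl⟩

theorem vlist_length (t : ATerm C) : (vlist t).length ≤ t.size := by
  induction t with
  | var x => simp [vlist, Term.size]
  | app f ts ih =>
      obtain _ | ⟨c, k⟩ := f
      · rw [show vlist (Term.app none ts)
          = vlist (ts ⟨0, by simp [uar]⟩) ++ vlist (ts ⟨1, by simp [uar]⟩) from by rw [vlist]]
        have hs : (Term.app (none : USig C) ts).size
            = 1 + ((ts ⟨0, by simp [uar]⟩).size + (ts ⟨1, by simp [uar]⟩).size) := by
          have : (Term.app (none : USig C) ts).size = 1 + ∑ i : Fin 2, (ts i).size := rfl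
          rw [this, Fin.sum_univ_two]
          rfl
        have h0 := ih ⟨0, by simp [uar]⟩
        have h1 := ih ⟨1, by simp [uar]⟩
        rw [List.length_append, hs]
        omega
      · rw [show vlist (Term.app (some (c, k)) ts)
          = .inr c :: (List.ofFn (fun j => vlist (ts j))).flatten from by rw [vlist]]
        have hs : (Term.app (some (c, k)) ts).size = 1 + ∑ j, (ts j).size := rfl
        have hj : ((List.ofFn (fun j => vlist (ts j))).flatten).length
            = ∑ j : Fin (uar (some (c, k))), (vlist (ts j)).length := by
          rw [List.length_flatten, List.map_ofFn, List.sum_ofFn]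
          rfl
        have hb : ∑ j : Fin (uar (some (c, k))), (vlist (ts j)).length
            ≤ ∑ j : Fin (uar (some (c, k))), (ts j).size :=
          Finset.sum_le_sum (fun j _ => ih j)
        simp only [List.length_cons, hj, hs]
        omega

/-- All constants of `t` lie in `K`. -/
def ConstsIn (K : Set C) (t : ATerm C) : Prop :=
  ∀ (c : C) (i : ℕ) (ts : Fin (uar (some (c, i))) → ATerm C),
    Subterm (.app (some (c, i)) ts) t → c ∈ K

theorem constsIn_arg {K : Set C} {f : USig C} {ts : Fin (uar f) → ATerm C}
    (h : ConstsIn K (Term.app f ts)) (i : Fin (uar f)) : ConstsIn K (ts i) :=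
  fun c k us hs => h c k us (Subterm.app f ts i _ hs)

/-- Index of the first occurrence in a symbol list. -/
noncomputable def symIdx (a : ℕ ⊕ C) : List (ℕ ⊕ C) → ℕ
  | [] => 0
  | b :: L => if a = b then 0 else symIdx a L + 1

theorem get?_symIdx {a : ℕ ⊕ C} : ∀ {L : List (ℕ ⊕ C)}, a ∈ L →
    L[symIdx a L]? = some a := by
  intro L
  induction L with
  | nil => intro h; cases h
  | cons b L ih =>
      intro h
      by_cases hb : a = b
      · subst hb
        rw [symIdx, if_pos rfl]
        rfl
      · rw [symIdx, if_neg hb]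
        have hm : a ∈ L := by
          rcases List.mem_cons.mp h with h' | h'
          · exact absurd h' hb
          · exact h'
        simpa using ih hm

theorem symIdx_lt {a : ℕ ⊕ C} : ∀ {L : List (ℕ ⊕ C)}, a ∈ L →
    symIdx a L < L.length := by
  intro L
  induction L with
  | nil => intro h; cases h
  | cons b L ih =>
      intro h
      by_cases hb : a = b
      · subst hb
        rw [symIdx, if_pos rfl]
        simp
      · rw [symIdx, if_neg hb]
        have hm : a ∈ L := by
          rcases List.mem_cons.mp h with h' | h'
          · exact absurd h' hb
          · exact h'
        have := ih hm
        simp only [List.length_cons]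
        omega

/-- Canonical renaming: variables and non-`K` constants are replaced by
canonically numbered variables. -/
noncomputable def canonMap (K : Set C) (L : List (ℕ ⊕ C)) : ATerm C → ATerm C
  | .var x => .var (symIdx (.inl x) L)
  | .app none ts => appT (canonMap K L (ts ⟨0, by simp [uar]⟩)) (canonMap K L (ts ⟨1, by simp [uar]⟩))
  | .app (some (c, i)) ts =>
      if c ∈ K ∨ i ≠ 0 then .app (some (c, i)) (fun j => canonMap K L (ts j))
      else .var (symIdx (.inr c) L)

theorem canonMap_var (K : Set C) (L : List (ℕ ⊕ C)) (x : ℕ) :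
    canonMap K L (.var x : ATerm C) = .var (symIdx (.inl x) L) := rfl

theorem canonMap_none (K : Set C) (L : List (ℕ ⊕ C)) (ts : Fin (uar (none : USig C)) → ATerm C) :
    canonMap K L (.app none ts)
      = appT (canonMap K L (ts ⟨0, by simp [uar]⟩)) (canonMap K L (ts ⟨1, by simp [uar]⟩)) := by
  rw [canonMap]

theorem canonMap_some (K : Set C) (L : List (ℕ ⊕ C)) (c : C) (i : ℕ)
    (ts : Fin (uar (some (c, i))) → ATerm C) :
    canonMap K L (.app (some (c, i)) ts)
      = if c ∈ K ∨ i ≠ 0 then Term.app (some (c, i)) (fun j => canonMap K L (ts j))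
        else .var (symIdx (.inr c) L) := by
  rw [canonMap]

theorem canonMap_subst {K : Set C} {L : List (ℕ ⊕ C)} {l : ATerm C} (hc : ConstsIn K l)
    (σ : ℕ → ATerm C) :
    canonMap K L (l.subst σ) = l.subst (fun x => canonMap K L (σ x)) := by
  induction l with
  | var x => rfl
  | app f ts ih =>
      obtain _ | ⟨c, i⟩ := f
      · have hsub : (Term.app (none : USig C) ts).subst σ
            = Term.app none (fun j => (ts j).subst σ) := rfl
        rw [hsub, canonMap_none, ih _ (constsIn_arg hc _), ih _ (constsIn_arg hc _)]
        have hsub2 : (Term.app (none : USig C) ts).subst (fun x => canonMap K L (σ x))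
            = Term.app none (fun j => (ts j).subst (fun x => canonMap K L (σ x))) := rfl
        rw [hsub2, app_none_eq_appT (fun j => (ts j).subst (fun x => canonMap K L (σ x)))]
      · have hcK : c ∈ K := hc c i ts (Subterm.refl _)
        have hsub : (Term.app (some (c, i)) ts).subst σ
            = Term.app (some (c, i)) (fun j => (ts j).subst σ) := rfl
        rw [hsub, canonMap_some, if_pos (Or.inl hcK)]
        have hsub2 : (Term.app (some (c, i)) ts).subst (fun x => canonMap K L (σ x))
            = Term.app (some (c, i)) (fun j => (ts j).subst (fun x => canonMap K L (σ x))) := rfl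
        rw [hsub2]
        congr 1
        funext j
        exact ih j (constsIn_arg hc j)

theorem rew_canonMap {K : Set C} {L : List (ℕ ⊕ C)} {R : Set (ATerm C × ATerm C)}
    (hRK : ∀ p ∈ R, ConstsIn K p.1 ∧ ConstsIn K p.2) {s u : ATerm C} (h : Rew R s u) :
    Rew R (canonMap K L s) (canonMap K L u) := by
  induction h with
  | rule l r σ hm =>
      rw [canonMap_subst (hRK _ hm).1, canonMap_subst (hRK _ hm).2]
      exact Rew.rule l r _ hm
  | congr f ts i u h ih =>
      obtain _ | ⟨c, k⟩ := f
      · rw [canonMap_none, canonMap_none]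
        rcases fin2_elim i with hi | hi <;> subst hi
        · rw [Function.update_self,
            Function.update_of_ne (by intro hc2; simp [Fin.ext_iff] at hc2)]
          exact rew_appT_left _ ih
        · rw [Function.update_self,
            Function.update_of_ne (by intro hc2; simp [Fin.ext_iff] at hc2)]
          exact rew_appT_right _ ih
      · rw [canonMap_some, canonMap_some]
        by_cases hck : c ∈ K ∨ k ≠ 0
        · rw [if_pos hck, if_pos hck]
          rw [show (fun j => canonMap K L (Function.update ts i u j))
              = Function.update (fun j => canonMap K L (ts j)) i (canonMap K L u) from
            update_comp (canonMap K L) ts i u]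
          exact Rew.congr _ _ i _ ih
        · push_neg at hck
          obtain ⟨_, hk0⟩ := hck
          subst hk0
          exact absurd i.isLt (by simp [uar])

/-- Reverse substitution. -/
noncomputable def tauL (L : List (ℕ ⊕ C)) : ℕ → ATerm C := fun k =>
  match L[k]? with
  | some (.inl x) => .var x
  | some (.inr c) => constT c
  | none => .var 0

theorem canonMap_tau {K : Set C} {L : List (ℕ ⊕ C)} :
    ∀ (t : ATerm C),
      (∀ u, Subterm u t → (∀ x : ℕ, u = .var x → Sum.inl x ∈ L) ∧
        (∀ (c : C) (i : ℕ) (ts : Fin (uar (some (c, i))) → ATerm C),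
          u = .app (some (c, i)) ts → Sum.inr c ∈ L)) →
      (canonMap K L t).subst (tauL L) = t := by
  intro t
  induction t with
  | var x =>
      intro h
      have hm : Sum.inl x ∈ L := (h _ (Subterm.refl _)).1 x rfl
      show tauL L (symIdx (Sum.inl x) L) = Term.var x
      unfold tauL
      rw [get?_symIdx hm]
  | app f ts ih =>
      intro h
      have harg : ∀ i, (canonMap K L (ts i)).subst (tauL L) = ts i := fun i =>
        ih i (fun u hu => h u (Subterm.app f ts i u hu))
      obtain _ | ⟨c, i⟩ := f
      · rw [canonMap_none, subst_appT, harg, harg]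
        exact (app_none_eq_appT ts).symm
      · rw [canonMap_some]
        by_cases hck : c ∈ K ∨ i ≠ 0
        · rw [if_pos hck]
          have : (Term.app (some (c, i)) (fun j => canonMap K L (ts j))).subst (tauL L)
              = Term.app (some (c, i)) (fun j => (canonMap K L (ts j)).subst (tauL L)) := rfl
          rw [this]
          congr 1
          funext j
          exact harg j
        · rw [if_neg hck]
          push_neg at hck
          obtain ⟨_, hi0⟩ := hck
          subst hi0
          have hm : Sum.inr c ∈ L := (h _ (Subterm.refl _)).2 c 0 ts rfl
          show tauL L (symIdx (Sum.inr c) L) = _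
          unfold tauL
          rw [get?_symIdx hm]
          exact (constT_eq ts).symm

end Bound
section Bound2

variable {C : Type}

attribute [local instance] Classical.propDecidable

/-- Canonical shape: variables below `v`, constants in `K`, applicative arities. -/
def CShape (K : Set C) (v : ℕ) (t : ATerm C) : Prop :=
  ∀ u, Subterm u t →
    (∀ x : ℕ, u = .var x → x < v) ∧
    (∀ (c : C) (i : ℕ) (ts : Fin (uar (some (c, i))) → ATerm C),
      u = .app (some (c, i)) ts → c ∈ K ∧ i = 0)

theorem cshape_subterm {K : Set C} {v : ℕ} {t u : ATerm C} (h : CShape K v t)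
    (hu : Subterm u t) : CShape K v u :=
  fun w hw => h w (subterm_trans hu w hw)

theorem cshape_mono {K : Set C} {v v' : ℕ} (hv : v ≤ v') {t : ATerm C}
    (h : CShape K v t) : CShape K v' t := by
  intro u hu
  refine ⟨fun x hx => lt_of_lt_of_le ((h u hu).1 x hx) hv, (h u hu).2⟩

theorem canon_finite (K : Set C) (hK : K.Finite) (v : ℕ) :
    ∀ s : ℕ, {t : ATerm C | CShape K v t ∧ t.size ≤ s}.Finite := by
  intro s
  induction s with
  | zero =>
      refine Set.Finite.subset Set.finite_empty ?_
      rintro t ⟨_, hs⟩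
      have := Term.size_pos t
      omega
  | succ s ih =>
      refine Set.Finite.subset
        ((((Set.finite_Iio v).image (fun x => (.var x : ATerm C))).union
          (hK.image constT)).union
          ((ih.prod ih).image (fun p : ATerm C × ATerm C => appT p.1 p.2))) ?_
      rintro t ⟨hsh, hsz⟩
      rcases t with x | ⟨f | ⟨c, i⟩, ts⟩
      · exact Or.inl (Or.inl ⟨x, (hsh _ (Subterm.refl _)).1 x rfl, rfl⟩)
      · refine Or.inr ?_
        have hsize : (Term.app (none : USig C) ts).size
            = 1 + ((ts ⟨0, by simp [uar]⟩).size + (ts ⟨1, by simp [uar]⟩).size) := by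
          have : (Term.app (none : USig C) ts).size = 1 + ∑ i : Fin 2, (ts i).size := rfl
          rw [this, Fin.sum_univ_two]
          rfl
        have hp0 := Term.size_pos (ts ⟨0, by simp [uar]⟩)
        have hp1 := Term.size_pos (ts ⟨1, by simp [uar]⟩)
        refine ⟨(ts ⟨0, by simp [uar]⟩, ts ⟨1, by simp [uar]⟩), ⟨⟨?_, ?_⟩, ⟨?_, ?_⟩⟩,
          (app_none_eq_appT ts).symm⟩
        · exact cshape_subterm hsh (Subterm.app none ts _ _ (Subterm.refl _))
        · show (ts ⟨0, by simp [uar]⟩).size ≤ s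
          omega
        · exact cshape_subterm hsh (Subterm.app none ts _ _ (Subterm.refl _))
        · show (ts ⟨1, by simp [uar]⟩).size ≤ s
          omega
      · obtain ⟨hcK, hi0⟩ := (hsh _ (Subterm.refl _)).2 c i ts rfl
        subst hi0
        exact Or.inl (Or.inr ⟨c, hcK, (constT_eq ts).symm⟩)

theorem cshape_appT {K : Set C} {v : ℕ} {a b : ATerm C} (ha : CShape K v a)
    (hb : CShape K v b) : CShape K v (appT a b) := by
  intro u hu
  rcases subterm_app (hu : Subterm u (Term.app none _)) with h | ⟨i, hi⟩
  · subst h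
    constructor
    · intro x hx; cases hx
    · intro c i ts hx; cases hx
  · rcases fin2_elim i with h | h <;> subst h
    · exact ha u (by simpa using hi)
    · exact hb u (by simpa using hi)

theorem canonMap_cshape {K : Set C} {L : List (ℕ ⊕ C)} :
    ∀ t : ATerm C, ApplicativeT t →
      (∀ u, Subterm u t → (∀ x : ℕ, u = .var x → Sum.inl x ∈ L) ∧
        (∀ (c : C) (i : ℕ) (ts : Fin (uar (some (c, i))) → ATerm C),
          u = .app (some (c, i)) ts → Sum.inr c ∈ L)) →
      CShape K L.length (canonMap K L t) := by
  intro t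
  induction t with
  | var x =>
      intro _ h u hu
      have := subterm_var (hu : Subterm u (Term.var (symIdx (Sum.inl x) L)))
      subst this
      constructor
      · intro y hy
        injection hy with hy
        rw [← hy]
        exact symIdx_lt ((h _ (Subterm.refl _)).1 x rfl)
      · intro c i ts hx; cases hx
  | app f ts ih =>
      intro happ h
      have harg : ∀ i, CShape K L.length (canonMap K L (ts i)) := fun i =>
        ih i (applicativeT_arg happ i) (fun u hu => h u (Subterm.app f ts i u hu))
      obtain _ | ⟨c, i⟩ := f
      · rw [canonMap_none]
        exact cshape_appT (harg _) (harg _)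
      · have hi0 : i = 0 := happ _ _ ts (Subterm.refl _) rfl
        subst hi0
        rw [canonMap_some]
        by_cases hcK : c ∈ K
        · rw [if_pos (Or.inl hcK)]
          intro u hu
          rcases subterm_app hu with hh | ⟨j, hj⟩
          · subst hh
            constructor
            · intro x hx; cases hx
            · intro c' i' ts' hx
              injection hx with h1 h2
              injection h1 with h1
              injection h1 with hc2 hi2
              exact ⟨hc2 ▸ hcK, hi2.symm⟩
          · exact harg j u hj
        · rw [if_neg (by simpa using hcK)]
          intro u hu
          have := subterm_var hu
          subst this
          constructor
          · intro y hy
            injection hy with hy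
            rw [← hy]
            exact symIdx_lt ((h _ (Subterm.refl _)).2 c 0 ts rfl)
          · intro c' i' ts' hx; cases hx

theorem canonMap_size {K : Set C} {L : List (ℕ ⊕ C)} :
    ∀ t : ATerm C, (canonMap K L t).size ≤ t.size := by
  intro t
  induction t with
  | var x => exact le_refl _
  | app f ts ih =>
      obtain _ | ⟨c, i⟩ := f
      · rw [canonMap_none, size_appT]
        have hsize : (Term.app (none : USig C) ts).size
            = 1 + ((ts ⟨0, by simp [uar]⟩).size + (ts ⟨1, by simp [uar]⟩).size) := by
          have : (Term.app (none : USig C) ts).size = 1 + ∑ i : Fin 2, (ts i).size := rfl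
          rw [this, Fin.sum_univ_two]
          rfl
        have h0 := ih ⟨0, by simp [uar]⟩
        have h1 := ih ⟨1, by simp [uar]⟩
        omega
      · rw [canonMap_some]
        split
        · have e1 : (Term.app (some (c, i)) fun j => canonMap K L (ts j)).size
              = 1 + ∑ j, (canonMap K L (ts j)).size := rfl
          have e2 : (Term.app (some (c, i)) ts).size = 1 + ∑ j, (ts j).size := rfl
          rw [e1, e2]
          have := Finset.sum_le_sum (fun j (_ : j ∈ Finset.univ) => ih j)
          omega
        · have := Term.size_pos (Term.app (some (c, i)) ts)
          show (Term.var _ : ATerm C).size ≤ _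
          rw [show (Term.var (symIdx (Sum.inr c) L) : ATerm C).size = 1 from rfl]
          omega

theorem relpow_map_canon {K : Set C} {L : List (ℕ ⊕ C)} {R : Set (ATerm C × ATerm C)}
    (hRK : ∀ p ∈ R, ConstsIn K p.1 ∧ ConstsIn K p.2) :
    ∀ (m : ℕ) {s u : ATerm C}, RelPow (Rew R) m s u →
      RelPow (Rew R) m (canonMap K L s) (canonMap K L u) := by
  intro m
  induction m with
  | zero => exact fun h => congrArg _ h
  | succ m ih =>
      rintro s u ⟨b, hb, hrest⟩
      exact ⟨canonMap K L b, rew_canonMap hRK hb, ih hrest⟩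

theorem relpow_subst {R : Set (ATerm C × ATerm C)} :
    ∀ (m : ℕ) {s u : ATerm C} (τ : ℕ → ATerm C), RelPow (Rew R) m s u →
      RelPow (Rew R) m (s.subst τ) (u.subst τ) := by
  intro m
  induction m with
  | zero => exact fun τ h => congrArg _ h
  | succ m ih =>
      rintro s u τ ⟨b, hb, hrest⟩
      exact ⟨b.subst τ, hb.substc τ, ih τ hrest⟩

theorem dh_canon {K : Set C} {R : Set (ATerm C × ATerm C)}
    (hRK : ∀ p ∈ R, ConstsIn K p.1 ∧ ConstsIn K p.2) (t : ATerm C) :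
    dh (Rew R) t = dh (Rew R) (canonMap K (vlist t) t) := by
  unfold dh
  congr 1
  ext m
  constructor
  · rintro ⟨u, hu⟩
    exact ⟨_, relpow_map_canon hRK m hu⟩
  · rintro ⟨u, hu⟩
    refine ⟨u.subst (tauL (vlist t)), ?_⟩
    have h2 := relpow_subst m (tauL (vlist t)) hu
    rwa [canonMap_tau t (fun u hu => ⟨mem_vlist_var hu, mem_vlist_const hu⟩)] at h2

/-- The constants occurring in `R`. -/
def RK (R : Set (ATerm C × ATerm C)) : Set C :=
  {c | ∃ p ∈ R, ∃ (i : ℕ) (ts : Fin (uar (some (c, i))) → ATerm C),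
    Subterm (.app (some (c, i)) ts) p.1 ∨ Subterm (.app (some (c, i)) ts) p.2}

theorem tconsts_finite (t : ATerm C) :
    {c : C | ∃ (i : ℕ) (ts : Fin (uar (some (c, i))) → ATerm C),
      Subterm (.app (some (c, i)) ts) t}.Finite := by
  induction t with
  | var x =>
      refine Set.Finite.subset Set.finite_empty ?_
      rintro c ⟨i, ts, hs⟩
      cases subterm_var hs
  | app f ts ih =>
      have hh : (match f with | some p => ({p.1} : Set C) | none => (∅ : Set C)).Finite := by
        rcases f with _ | p
        · exact Set.finite_empty
        · exact Set.finite_singleton _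
      refine Set.Finite.subset (hh.union (Set.finite_iUnion ih)) ?_
      rintro c ⟨i, us, hs⟩
      rcases subterm_app hs with h | ⟨j, hj⟩
      · left
        rcases f with _ | p
        · cases h
        · injection h with h1 h2
          injection h1 with h1
          rw [← h1]
          rfl
      · exact Or.inr (Set.mem_iUnion.mpr ⟨j, ⟨i, us, hj⟩⟩)

theorem RK_finite {R : Set (ATerm C × ATerm C)} (hfin : R.Finite) : (RK R).Finite := by
  refine Set.Finite.subset
    (Set.Finite.biUnion hfin (fun p _ => (tconsts_finite p.1).union (tconsts_finite p.2))) ?_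
  rintro c ⟨p, hp, i, ts, h | h⟩
  · exact Set.mem_biUnion hp (Or.inl ⟨i, ts, h⟩)
  · exact Set.mem_biUnion hp (Or.inr ⟨i, ts, h⟩)

theorem RK_consts {R : Set (ATerm C × ATerm C)} :
    ∀ p ∈ R, ConstsIn (RK R) p.1 ∧ ConstsIn (RK R) p.2 := fun p hp =>
  ⟨fun c i ts hs => ⟨p, hp, i, ts, Or.inl hs⟩, fun c i ts hs => ⟨p, hp, i, ts, Or.inr hs⟩⟩

theorem T_bdd {R : Set (ATerm C × ATerm C)} (hfin : R.Finite) (n : ℕ) :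
    BddAbove {m | ∃ t : ATerm C, ApplicativeT t ∧ t.size ≤ n ∧ m = dh (Rew R) t} := by
  refine BddAbove.mono ?_
    (((canon_finite (RK R) (RK_finite hfin) n n).image (dh (Rew R))).bddAbove)
  rintro m ⟨t, hat, hsz, rfl⟩
  refine ⟨canonMap (RK R) (vlist t) t, ⟨?_, (canonMap_size t).trans hsz⟩,
    (dh_canon RK_consts t).symm⟩
  refine cshape_mono ((vlist_length t).trans hsz) ?_
  exact canonMap_cshape t hat (fun u hu => ⟨mem_vlist_var hu, mem_vlist_const hu⟩)

end Bound2
/-- if `R` is a non-empty ATRS with `dc_R(n) ∈ O(n^k)` then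
`dc_{R_η↓/U}(n) ≤ dc_R(2n)` for all `n`, and `dc_{R_η↓/U}(n) ∈ O(n^k)`. -/
theorem dc_preserve {C : Type} (R : Set (ATerm C × ATerm C)) (aa : C → ℕ)
    (hR : IsATRS R) (hl : LHVF R) (haa : AASpec R aa)
    (hne : R.Nonempty) (hfin : R.Finite) (k : ℕ)
    (hdc : BigO (dcOn (Rew R) ApplicativeT) (fun n => n ^ k)) :
    (∀ n, dcOn (RelStep (EtaDown aa R) (USys aa)) (GoodTerm aa) n ≤
      dcOn (Rew R) ApplicativeT (2 * n)) ∧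
    BigO (dcOn (RelStep (EtaDown aa R) (USys aa)) (GoodTerm aa)) (fun n => n ^ k) := by
  have key : ∀ n, dcOn (RelStep (EtaDown aa R) (USys aa)) (GoodTerm aa) n ≤
      dcOn (Rew R) ApplicativeT (2 * n) := by
    intro n
    unfold dcOn
    have hsub : {m | ∃ t : ATerm C, GoodTerm aa t ∧ t.size ≤ n ∧
          m = dh (RelStep (EtaDown aa R) (USys aa)) t}
        ⊆ {m | ∃ t : ATerm C, ApplicativeT t ∧ t.size ≤ 2 * n ∧ m = dh (Rew R) t} := by
      rintro m ⟨t, hg, hsz, rfl⟩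
      refine ⟨curryId t, curryId_applicative t, ?_, dh_eq_curry hR hl haa hg⟩
      have := curryId_size t
      omega
    have hT := T_bdd hfin (2 * n)
    rcases Set.eq_empty_or_nonempty {m | ∃ t : ATerm C, GoodTerm aa t ∧ t.size ≤ n ∧
        m = dh (RelStep (EtaDown aa R) (USys aa)) t} with he | hne2
    · rw [he, csSup_empty]
      exact Nat.zero_le _
    · exact csSup_le_csSup hT hne2 hsub
  refine ⟨key, ?_⟩
  obtain ⟨M, N, h⟩ := hdc
  refine ⟨M * 2 ^ k, N, fun n => (key n).trans ((h (2 * n)).trans (le_of_eq ?_))⟩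
  show M * (2 * n) ^ k + N = M * 2 ^ k * n ^ k + N
  rw [mul_pow, ← mul_assoc]
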